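/- arXiv:2210.07019 — 3 statements merged into one kernel-verified Lean document; each statement's English description precedes it below -/
import Mathlib

section
/- Let μ be a finite Borel measure on ℝ^d. Then the function θ ↦ dim_F^θ μ is non-decreasing and concave on [0,1]; in particular it is continuous on (0,1]. Moreover, for every non-empty set X ⊆ ℝ^d, the function θ ↦ dim_F^θ X is non-decreasing on [0,1] and continuous on (0,1]. -/
open MeasureTheory Filter Set
open scoped ENNReal NNReal Topology

noncomputable section

abbrev Ed (d : ℕ) := EuclideanSpace ℝ (Fin d)

noncomputable def ftm {d : ℕ} (μ : Measure (Ed d)) (z : Ed d) : ℂ :=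
  ∫ x, Complex.exp (Complex.I * (-2 * Real.pi * (inner ℝ z x : ℝ))) ∂μ

noncomputable def energyJ {d : ℕ} (μ : Measure (Ed d)) (s θ : ℝ) : ℝ≥0∞ :=
  if θ = 0 then ⨆ z : Ed d, ENNReal.ofReal (‖ftm μ z‖ ^ 2 * ‖z‖ ^ s)
  else (∫⁻ z : Ed d, ENNReal.ofReal (‖ftm μ z‖ ^ (2 / θ) * ‖z‖ ^ (s / θ - d))) ^ θ

noncomputable def dimF {d : ℕ} (μ : Measure (Ed d)) (θ : ℝ) : ℝ≥0∞ :=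
  ⨆ (s : NNReal) (_ : energyJ μ s θ < ⊤), (s : ℝ≥0∞)

def sptm {d : ℕ} (μ : Measure (Ed d)) : Set (Ed d) := {x | ∀ r > 0, 0 < μ (Metric.ball x r)}

noncomputable def dimFS {d : ℕ} (X : Set (Ed d)) (θ : ℝ) : ℝ≥0∞ :=
  ⨆ (μ : Measure (Ed d)) (_ : IsFiniteMeasure μ) (_ : μ ≠ 0) (_ : sptm μ ⊆ X),
    min (dimF μ θ) (d : ℝ≥0∞)

variable {d : ℕ}

lemma expIabs (z x : Ed d) :
    ‖Complex.exp (Complex.I * (-2 * Real.pi * (inner ℝ z x : ℝ)))‖ = 1 := by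
  have h : Complex.I * (-2 * Real.pi * (inner ℝ z x : ℝ)) =
      Complex.I * ((-2 * Real.pi * (inner ℝ z x : ℝ) : ℝ) : ℂ) := by push_cast; ring
  rw [h, Complex.norm_exp]
  have : (Complex.I * ((-2 * Real.pi * (inner ℝ z x : ℝ) : ℝ) : ℂ)).re = 0 := by simp
  rw [this, Real.exp_zero]

lemma inner_cont_fst (x : Ed d) : Continuous fun z : Ed d => (inner ℝ z x : ℝ) :=
  continuous_id.inner continuous_const

lemma inner_cont_snd (z : Ed d) : Continuous fun x : Ed d => (inner ℝ z x : ℝ) :=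
  continuous_const.inner continuous_id

lemma ftm_cont (μ : Measure (Ed d)) [IsFiniteMeasure μ] : Continuous (ftm μ) := by
  apply MeasureTheory.continuous_of_dominated (bound := fun _ => (1:ℝ))
  · intro z
    apply Continuous.aestronglyMeasurable
    exact Complex.continuous_exp.comp (continuous_const.mul
      (continuous_const.mul (Complex.continuous_ofReal.comp (inner_cont_snd z))))
  · intro z
    filter_upwards with x
    rw [expIabs]
  · exact integrable_const 1
  · filter_upwards with x
    exact Complex.continuous_exp.comp (continuous_const.mul
      (continuous_const.mul (Complex.continuous_ofReal.comp (inner_cont_fst x))))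

lemma ftm_bound (μ : Measure (Ed d)) [IsFiniteMeasure μ] (z : Ed d) :
    ‖ftm μ z‖ ≤ (μ univ).toReal := by
  calc ‖ftm μ z‖ ≤ ∫ x, ‖Complex.exp (Complex.I * (-2 * Real.pi * (inner ℝ z x : ℝ)))‖ ∂μ :=
        norm_integral_le_integral_norm _
    _ ≤ ∫ _x, (1:ℝ) ∂μ := by
        apply integral_mono_of_nonneg (Eventually.of_forall fun x => norm_nonneg _)
          (integrable_const 1)
        filter_upwards with x
        rw [expIabs]
    _ = (μ univ).toReal := by simp [Measure.real]

noncomputable def Gf {d : ℕ} (μ : Measure (Ed d)) (u v : ℝ) (z : Ed d) : ℝ≥0∞ :=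
  ENNReal.ofReal (‖ftm μ z‖) ^ u * ENNReal.ofReal ‖z‖ ^ v

lemma Gf_meas (μ : Measure (Ed d)) [IsFiniteMeasure μ] (u v : ℝ) : Measurable (Gf μ u v) := by
  apply Measurable.mul
  · exact (ENNReal.measurable_ofReal.comp (continuous_norm.measurable.comp
      (ftm_cont μ).measurable)).pow_const u
  · exact (ENNReal.measurable_ofReal.comp measurable_norm).pow_const v

lemma Gf_eq {μ : Measure (Ed d)} {u v : ℝ} {z : Ed d} (hz : z ≠ 0) (hu : 0 < u) :
    ENNReal.ofReal (‖ftm μ z‖ ^ u * ‖z‖ ^ v) = Gf μ u v z := by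
  rw [ENNReal.ofReal_mul (Real.rpow_nonneg (norm_nonneg _) u)]
  unfold Gf
  congr 1
  · rcases eq_or_lt_of_le (norm_nonneg (ftm μ z)) with h | h
    · rw [← h, Real.zero_rpow hu.ne']
      simp [ENNReal.zero_rpow_of_pos hu]
    · exact (ENNReal.ofReal_rpow_of_pos h).symm
  · have h : 0 < ‖z‖ := norm_pos_iff.mpr hz
    exact (ENNReal.ofReal_rpow_of_pos h).symm

lemma ae_ne_zero (hd : 1 ≤ d) : ∀ᵐ z : Ed d, z ≠ 0 := by
  haveI : Nonempty (Fin d) := Fin.pos_iff_nonempty.mp hd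
  have h0 : (volume : Measure (Ed d)) {0} = 0 := measure_singleton _
  rw [ae_iff]
  convert h0 using 2
  ext z; simp [not_not]

lemma energy_eq {μ : Measure (Ed d)} {s θ : ℝ} (hd : 1 ≤ d) (hθ : 0 < θ) :
    energyJ μ s θ = (∫⁻ z, Gf μ (2/θ) (s/θ - d) z) ^ θ := by
  rw [energyJ, if_neg hθ.ne']
  congr 1
  apply lintegral_congr_ae
  filter_upwards [ae_ne_zero hd] with z hz
  exact Gf_eq hz (by positivity)

lemma energy_lt_top_iff {μ : Measure (Ed d)} {s θ : ℝ} (hd : 1 ≤ d) (hθ : 0 < θ) :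
    energyJ μ s θ < ⊤ ↔ (∫⁻ z, Gf μ (2/θ) (s/θ - d) z) < ⊤ := by
  rw [energy_eq hd hθ]
  exact ENNReal.rpow_lt_top_iff_of_pos hθ

lemma ennrpow_anti {x y : ℝ≥0∞} {v : ℝ} (hv : v ≤ 0) (h : x ≤ y) : y ^ v ≤ x ^ v := by
  have h2 : x ^ (-v) ≤ y ^ (-v) := ENNReal.rpow_le_rpow h (by linarith)
  calc y ^ v = (y ^ (-v))⁻¹ := by rw [← ENNReal.rpow_neg, neg_neg]
    _ ≤ (x ^ (-v))⁻¹ := ENNReal.inv_le_inv.mpr h2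
    _ = x ^ v := by rw [← ENNReal.rpow_neg, neg_neg]

lemma finrank_Ed : Module.finrank ℝ (Ed d) = d := by
  rw [finrank_euclideanSpace, Fintype.card_fin]

lemma norm_rpow_far {v : ℝ} (hv : v < -(d:ℝ)) :
    ∫⁻ z in (Metric.ball (0 : Ed d) 1)ᶜ, ENNReal.ofReal ‖z‖ ^ v < ⊤ := by
  have hv0 : v < 0 := by
    have : (0:ℝ) ≤ d := Nat.cast_nonneg d
    linarith
  have hb : ∀ z : Ed d, z ∈ (Metric.ball (0 : Ed d) 1)ᶜ →
      ENNReal.ofReal ‖z‖ ^ v ≤ ENNReal.ofReal ((2:ℝ) ^ (-v)) *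
        ENNReal.ofReal ((1 + ‖z‖) ^ (-(-v))) := by
    intro z hz
    have h1 : (1:ℝ) ≤ ‖z‖ := by
      have := hz
      rw [mem_compl_iff, mem_ball_zero_iff, not_lt] at this
      exact this
    have hzpos : (0:ℝ) < ‖z‖ := lt_of_lt_of_le one_pos h1
    rw [ENNReal.ofReal_rpow_of_pos hzpos, ← ENNReal.ofReal_mul (by positivity)]
    apply ENNReal.ofReal_le_ofReal
    have hhalf : (1 + ‖z‖) / 2 ≤ ‖z‖ := by linarith
    have := Real.rpow_le_rpow_of_nonpos (by positivity) hhalf hv0.le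
    calc ‖z‖ ^ v ≤ ((1 + ‖z‖) / 2) ^ v := this
      _ = (1 + ‖z‖) ^ v / 2 ^ v := Real.div_rpow (by positivity) (by norm_num : (0:ℝ) ≤ 2) v
      _ = 2 ^ (-v) * (1 + ‖z‖) ^ (-(-v)) := by
          rw [neg_neg, div_eq_mul_inv, ← Real.rpow_neg (by norm_num : (0:ℝ) ≤ 2)]
          ring
  calc ∫⁻ z in (Metric.ball (0 : Ed d) 1)ᶜ, ENNReal.ofReal ‖z‖ ^ v
      ≤ ∫⁻ z in (Metric.ball (0 : Ed d) 1)ᶜ,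
          ENNReal.ofReal ((2:ℝ) ^ (-v)) * ENNReal.ofReal ((1 + ‖z‖) ^ (-(-v))) := by
        apply setLIntegral_mono (by fun_prop) hb
    _ ≤ ∫⁻ z : Ed d, ENNReal.ofReal ((2:ℝ) ^ (-v)) * ENNReal.ofReal ((1 + ‖z‖) ^ (-(-v))) :=
        lintegral_mono_set (subset_univ _) |>.trans (by rw [Measure.restrict_univ])
    _ = ENNReal.ofReal ((2:ℝ) ^ (-v)) * ∫⁻ z : Ed d, ENNReal.ofReal ((1 + ‖z‖) ^ (-(-v))) :=
        lintegral_const_mul' _ _ ENNReal.ofReal_ne_top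
    _ < ⊤ := by
        apply ENNReal.mul_lt_top ENNReal.ofReal_lt_top
        apply finite_integral_one_add_norm
        rw [finrank_Ed]; linarith

lemma norm_rpow_near (hd : 1 ≤ d) {v : ℝ} (hv : -(d:ℝ) < v) :
    ∫⁻ z in Metric.ball (0 : Ed d) 1, ENNReal.ofReal ‖z‖ ^ v < ⊤ := by
  haveI : Nonempty (Fin d) := Fin.pos_iff_nonempty.mp hd
  rcases le_or_gt 0 v with hv0 | hv0
  · -- easy: bounded by 1 on the ball
    calc ∫⁻ z in Metric.ball (0 : Ed d) 1, ENNReal.ofReal ‖z‖ ^ v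
        ≤ ∫⁻ _z in Metric.ball (0 : Ed d) 1, (1:ℝ≥0∞) := by
          apply setLIntegral_mono measurable_const
          intro z hz
          have : ENNReal.ofReal ‖z‖ ≤ 1 := by
            rw [show (1:ℝ≥0∞) = ENNReal.ofReal 1 by simp]
            exact ENNReal.ofReal_le_ofReal (mem_ball_zero_iff.mp hz).le
          calc ENNReal.ofReal ‖z‖ ^ v ≤ (1:ℝ≥0∞) ^ v := ENNReal.rpow_le_rpow this hv0
            _ = 1 := ENNReal.one_rpow v
      _ = volume (Metric.ball (0 : Ed d) 1) := by rw [setLIntegral_const, one_mul]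
      _ < ⊤ := measure_ball_lt_top
  · -- shells
    set c : ℝ := (2:ℝ)⁻¹ with hc
    have hc0 : (0:ℝ) < c := by norm_num
    have hc1 : c < 1 := by norm_num
    set S : ℕ → Set (Ed d) := fun k =>
      Metric.closedBall (0 : Ed d) (c ^ k) \ Metric.closedBall (0 : Ed d) (c ^ (k+1)) with hS
    have hcover : Metric.ball (0 : Ed d) 1 ⊆ {(0 : Ed d)} ∪ ⋃ k, S k := by
      intro z hz
      rcases eq_or_ne z 0 with rfl | hz0
      · exact Or.inl rfl
      right
      have hzpos : (0:ℝ) < ‖z‖ := norm_pos_iff.mpr hz0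
      have hz1 : ‖z‖ < 1 := mem_ball_zero_iff.mp hz
      have ht1 : (1:ℝ) < ‖z‖⁻¹ := (one_lt_inv₀ hzpos).mpr hz1
      set k : ℕ := ⌊Real.logb 2 ‖z‖⁻¹⌋₊ with hk
      have hlog0 : 0 ≤ Real.logb 2 ‖z‖⁻¹ := Real.logb_nonneg (by norm_num) ht1.le
      have h1 : (2:ℝ) ^ (k:ℝ) ≤ ‖z‖⁻¹ := by
        calc (2:ℝ) ^ (k:ℝ) ≤ (2:ℝ) ^ (Real.logb 2 ‖z‖⁻¹) :=
              Real.rpow_le_rpow_of_exponent_le (by norm_num) (Nat.floor_le hlog0)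
          _ = ‖z‖⁻¹ := Real.rpow_logb (by norm_num) (by norm_num) (by positivity)
      have h2 : ‖z‖⁻¹ < (2:ℝ) ^ ((k:ℝ)+1) := by
        calc ‖z‖⁻¹ = (2:ℝ) ^ (Real.logb 2 ‖z‖⁻¹) :=
              (Real.rpow_logb (by norm_num) (by norm_num) (by positivity)).symm
          _ < (2:ℝ) ^ ((k:ℝ)+1) := by
              apply Real.rpow_lt_rpow_of_exponent_lt (by norm_num)
              push_cast
              exact Nat.lt_floor_add_one _
      refine mem_iUnion.mpr ⟨k, ?_, ?_⟩
      · -- ‖z‖ ≤ c ^ k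
        rw [Metric.mem_closedBall, dist_zero_right]
        have : ‖z‖ ≤ ((2:ℝ) ^ (k:ℝ))⁻¹ := by
          rw [← inv_inv ‖z‖]
          exact inv_anti₀ (by positivity) h1
        calc ‖z‖ ≤ ((2:ℝ) ^ (k:ℝ))⁻¹ := this
          _ = c ^ k := by
            rw [hc, inv_pow, Real.rpow_natCast]
      · -- ¬ ‖z‖ ≤ c ^ (k+1)
        rw [Metric.mem_closedBall, dist_zero_right, not_le]
        have : ((2:ℝ) ^ ((k:ℝ)+1))⁻¹ < ‖z‖ := by
          rw [← inv_inv ‖z‖]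
          exact inv_strictAnti₀ (by positivity) h2
        calc c ^ (k+1) = ((2:ℝ) ^ ((k:ℝ)+1))⁻¹ := by
              rw [hc, inv_pow, ← Real.rpow_natCast]
              norm_num
          _ < ‖z‖ := this
    set B : ℝ≥0∞ := volume (Metric.ball (0 : Ed d) 1) with hB
    have hBlt : B < ⊤ := measure_ball_lt_top
    set a : ℝ≥0∞ := ENNReal.ofReal c with ha
    have ha0 : a ≠ 0 := by
      simp [ha, hc0, ENNReal.ofReal_eq_zero, not_le]
    have hatop : a ≠ ⊤ := ENNReal.ofReal_ne_top
    have ha1 : a < 1 := by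
      rw [ha, show (1:ℝ≥0∞) = ENNReal.ofReal 1 by simp]
      exact (ENNReal.ofReal_lt_ofReal_iff one_pos).mpr hc1
    have hshell : ∀ k : ℕ, ∫⁻ z in S k, ENNReal.ofReal ‖z‖ ^ v ≤
        (a ^ v * B) * (a ^ (v + d)) ^ k := by
      intro k
      have hSsub : S k ⊆ Metric.closedBall (0 : Ed d) (c ^ k) := diff_subset
      have hbnd : ∀ z ∈ S k, ENNReal.ofReal ‖z‖ ^ v ≤ (a ^ (k+1) : ℝ≥0∞) ^ v := by
        intro z hz
        apply ennrpow_anti hv0.le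
        have : c ^ (k+1) ≤ ‖z‖ := by
          have := hz.2
          rw [Metric.mem_closedBall, dist_zero_right, not_le] at this
          exact this.le
        calc (a:ℝ≥0∞) ^ (k+1) = ENNReal.ofReal (c ^ (k+1)) := (ENNReal.ofReal_pow hc0.le _).symm
          _ ≤ ENNReal.ofReal ‖z‖ := ENNReal.ofReal_le_ofReal this
      calc ∫⁻ z in S k, ENNReal.ofReal ‖z‖ ^ v
          ≤ ∫⁻ _z in S k, ((a ^ (k+1) : ℝ≥0∞) ^ v) := setLIntegral_mono measurable_const hbnd
        _ = ((a ^ (k+1) : ℝ≥0∞) ^ v) * volume (S k) := setLIntegral_const _ _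
        _ ≤ ((a ^ (k+1) : ℝ≥0∞) ^ v) * (a ^ (d * k) * B) := by
            apply mul_le_mul_right
            calc volume (S k) ≤ volume (Metric.closedBall (0 : Ed d) (c ^ k)) :=
                  measure_mono hSsub
              _ = ENNReal.ofReal ((c ^ k) ^ Module.finrank ℝ (Ed d)) * B :=
                  Measure.addHaar_closedBall _ _ (by positivity)
              _ = a ^ (d * k) * B := by
                  rw [finrank_Ed, ← pow_mul, ENNReal.ofReal_pow hc0.le, mul_comm k d]
        _ = (a ^ v * B) * (a ^ (v + d)) ^ k := by
            rw [← ENNReal.rpow_natCast a (k+1), ← ENNReal.rpow_natCast a (d * k),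
              ← ENNReal.rpow_mul, ← ENNReal.rpow_natCast (a ^ (v+d)) k, ← ENNReal.rpow_mul]
            have e1 : a ^ ((((k+1:ℕ)):ℝ) * v) * (a ^ (((d*k:ℕ)):ℝ) * B)
                = a ^ ((((k+1:ℕ)):ℝ)*v + (((d*k:ℕ)):ℝ)) * B := by
              rw [← mul_assoc, ← ENNReal.rpow_add _ _ ha0 hatop]
            have e2 : a ^ v * B * a ^ ((v+(d:ℝ))*(k:ℝ))
                = a ^ (v + (v+(d:ℝ))*(k:ℝ)) * B := by
              rw [mul_right_comm, ← ENNReal.rpow_add _ _ ha0 hatop]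
            rw [e1, e2]
            congr 1
            push_cast
            ring
      -- done
    calc ∫⁻ z in Metric.ball (0 : Ed d) 1, ENNReal.ofReal ‖z‖ ^ v
        ≤ ∫⁻ z in ({(0 : Ed d)} ∪ ⋃ k, S k), ENNReal.ofReal ‖z‖ ^ v :=
          lintegral_mono_set hcover
      _ ≤ (∫⁻ z in ({(0 : Ed d)} : Set (Ed d)), ENNReal.ofReal ‖z‖ ^ v)
            + ∫⁻ z in (⋃ k, S k), ENNReal.ofReal ‖z‖ ^ v := lintegral_union_le _ _ _
      _ ≤ 0 + ∑' k, ∫⁻ z in S k, ENNReal.ofReal ‖z‖ ^ v := by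
          apply add_le_add
          · rw [setLIntegral_measure_zero]
            exact measure_singleton _
          · exact lintegral_iUnion_le _ _
      _ ≤ 0 + ∑' k, (a ^ v * B) * (a ^ (v + d)) ^ k := by
          apply add_le_add le_rfl (ENNReal.tsum_le_tsum hshell)
      _ < ⊤ := by
          rw [zero_add, ENNReal.tsum_mul_left, ENNReal.tsum_geometric]
          apply ENNReal.mul_lt_top
          · apply ENNReal.mul_lt_top _ hBlt
            rw [lt_top_iff_ne_top]
            intro h
            rw [ENNReal.rpow_eq_top_iff] at h
            rcases h with ⟨h1, _⟩ | ⟨h1, _⟩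
            exacts [ha0 h1, hatop h1]
          · rw [ENNReal.inv_lt_top]
            have hq : a ^ (v + (d:ℝ)) < 1 := ENNReal.rpow_lt_one ha1 (by linarith)
            exact tsub_pos_of_lt hq

lemma far_pointwise {μ : Measure (Ed d)} {θ θ₁ α γ s₀ s₁ s' C : ℝ}
    (hθ : 0 < θ) (hθ₁ : 0 < θ₁) (hα0 : 0 ≤ α) (hγ0 : 0 ≤ γ)
    (hγdef : 1/θ = α/θ₁ + γ)
    (hC : ∀ z, ‖ftm μ z‖ ^ 2 * ‖z‖ ^ s₀ ≤ C)
    {z : Ed d} (hz : 1 ≤ ‖z‖) :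
    Gf μ (2/θ) (s'/θ - d) z ≤ (Gf μ (2/θ₁) (s₁/θ₁ - d) z) ^ α *
      ((ENNReal.ofReal C) ^ γ *
        ENNReal.ofReal ‖z‖ ^ (s'/θ - d - α*(s₁/θ₁ - d) - γ*s₀)) := by
  set A : ℝ≥0∞ := ENNReal.ofReal (‖ftm μ z‖) with hA
  set N : ℝ≥0∞ := ENNReal.ofReal ‖z‖ with hN
  have hNne0 : N ≠ 0 := by
    rw [hN, Ne, ENNReal.ofReal_eq_zero, not_le]
    linarith
  have hNnetop : N ≠ ⊤ := ENNReal.ofReal_ne_top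
  rcases eq_or_lt_of_le (norm_nonneg (ftm μ z)) with h0 | h0
  · -- abs = 0
    have hA0 : A = 0 := by rw [hA, ← h0, ENNReal.ofReal_zero]
    unfold Gf
    rw [← hA, ← hN, hA0, ENNReal.zero_rpow_of_pos (by positivity), zero_mul]
    exact zero_le
  · have hAne0 : A ≠ 0 := by
      rw [hA, Ne, ENNReal.ofReal_eq_zero, not_le]; exact h0
    have hAnetop : A ≠ ⊤ := ENNReal.ofReal_ne_top
    set e : ℝ := s'/θ - d - α*(s₁/θ₁ - d) - γ*s₀ with he
    have hsplitA : (2:ℝ)/θ = 2*α/θ₁ + 2*γ := by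
      field_simp at hγdef ⊢
      linarith [hγdef]
    have hsplitN : s'/θ - d = α*(s₁/θ₁ - d) + (γ*s₀ + e) := by rw [he]; ring
    have key : Gf μ (2/θ) (s'/θ - d) z =
        ((Gf μ (2/θ₁) (s₁/θ₁ - d) z) ^ α) * ((A^(2:ℝ) * N^s₀)^γ * N^e) := by
      unfold Gf
      rw [← hA, ← hN, hsplitA, hsplitN]
      rw [ENNReal.rpow_add _ _ hAne0 hAnetop, ENNReal.rpow_add _ _ hNne0 hNnetop,
        ENNReal.rpow_add _ _ hNne0 hNnetop]
      rw [ENNReal.mul_rpow_of_nonneg _ _ hα0, ENNReal.mul_rpow_of_nonneg _ _ hγ0]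
      rw [← ENNReal.rpow_mul, ← ENNReal.rpow_mul, ← ENNReal.rpow_mul, ← ENNReal.rpow_mul]
      ring_nf
    rw [key]
    apply mul_le_mul_right
    apply mul_le_mul_left
    apply ENNReal.rpow_le_rpow _ hγ0
    have : A^(2:ℝ) * N^s₀ = ENNReal.ofReal (‖ftm μ z‖ ^ 2 * ‖z‖ ^ s₀) := by
      rw [ENNReal.ofReal_mul (by positivity), hA, hN]
      congr 1
      · rw [ENNReal.ofReal_rpow_of_pos h0]
        norm_num [Real.rpow_two]
      · rw [ENNReal.ofReal_rpow_of_pos (by linarith)]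
    rw [this]
    exact ENNReal.ofReal_le_ofReal (hC z)

lemma keyfin {μ : Measure (Ed d)} [IsFiniteMeasure μ] (hd : 1 ≤ d)
    {θ θ₁ α s₀ s₁ s' C : ℝ}
    (hθ : 0 < θ) (hθ₁ : 0 < θ₁) (hα0 : 0 ≤ α) (hα1 : α < 1)
    (hγ0 : 0 ≤ 1/θ - α/θ₁) (hs' : 0 < s')
    (hE : s'/θ - α * (s₁/θ₁) - (1/θ - α/θ₁) * s₀ < 0)
    (hC : ∀ z, ‖ftm μ z‖ ^ 2 * ‖z‖ ^ s₀ ≤ C)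
    (hI : α ≠ 0 → (∫⁻ z, Gf μ (2/θ₁) (s₁/θ₁ - (d:ℝ)) z) < ⊤) :
    (∫⁻ z, Gf μ (2/θ) (s'/θ - (d:ℝ)) z) < ⊤ := by
  set γ : ℝ := 1/θ - α/θ₁ with hγ
  set M : ℝ := (μ univ).toReal with hM
  have hMnn : 0 ≤ M := ENNReal.toReal_nonneg
  rw [← lintegral_add_compl (Gf μ (2/θ) (s'/θ - (d:ℝ)))
    (measurableSet_ball : MeasurableSet (Metric.ball (0 : Ed d) 1))]
  apply ENNReal.add_lt_top.mpr
  constructor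
  · -- near part
    have hMne : (ENNReal.ofReal M) ^ ((2:ℝ)/θ) ≠ ⊤ := by
      intro h
      rw [ENNReal.rpow_eq_top_iff] at h
      rcases h with ⟨_, h2⟩ | ⟨h1, _⟩
      · have : (0:ℝ) < 2/θ := by positivity
        linarith
      · exact ENNReal.ofReal_ne_top h1
    calc ∫⁻ z in Metric.ball (0 : Ed d) 1, Gf μ (2/θ) (s'/θ - (d:ℝ)) z
        ≤ ∫⁻ z in Metric.ball (0 : Ed d) 1,
            (ENNReal.ofReal M) ^ ((2:ℝ)/θ) * ENNReal.ofReal ‖z‖ ^ (s'/θ - (d:ℝ)) := by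
          apply setLIntegral_mono
            (measurable_const.mul ((ENNReal.measurable_ofReal.comp measurable_norm).pow_const _))
          intro z _
          unfold Gf
          apply mul_le_mul_left
          exact ENNReal.rpow_le_rpow (ENNReal.ofReal_le_ofReal (ftm_bound μ z)) (by positivity)
      _ = (ENNReal.ofReal M) ^ ((2:ℝ)/θ) *
            ∫⁻ z in Metric.ball (0 : Ed d) 1, ENNReal.ofReal ‖z‖ ^ (s'/θ - (d:ℝ)) :=
          lintegral_const_mul' _ _ hMne
      _ < ⊤ := by
          apply ENNReal.mul_lt_top (lt_top_iff_ne_top.mpr hMne)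
          apply norm_rpow_near hd
          have : 0 < s'/θ := by positivity
          linarith
  · -- far part
    have hCnn : 0 ≤ C := le_trans (by positivity) (hC 0)
    set e : ℝ := s'/θ - d - α*(s₁/θ₁ - d) - γ*s₀ with he
    set R : Set (Ed d) := (Metric.ball (0 : Ed d) 1)ᶜ with hR
    have hKne : (ENNReal.ofReal C) ^ γ ≠ ⊤ := by
      intro h
      rw [ENNReal.rpow_eq_top_iff] at h
      rcases h with ⟨_, h2⟩ | ⟨h1, _⟩
      · linarith
      · exact ENNReal.ofReal_ne_top h1
    have step1 : ∫⁻ z in R, Gf μ (2/θ) (s'/θ - (d:ℝ)) z ≤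
        (ENNReal.ofReal C) ^ γ * ∫⁻ z in R,
          (Gf μ (2/θ₁) (s₁/θ₁ - (d:ℝ)) z) ^ α * ENNReal.ofReal ‖z‖ ^ e := by
      rw [← lintegral_const_mul' _ _ hKne]
      apply setLIntegral_mono
      · exact (measurable_const.mul (((Gf_meas μ _ _).pow_const _).mul
          ((ENNReal.measurable_ofReal.comp measurable_norm).pow_const _)))
      · intro z hz
        have hz1 : 1 ≤ ‖z‖ := by
          have := hz
          rw [hR, mem_compl_iff, mem_ball_zero_iff, not_lt] at this
          exact this
        calc Gf μ (2/θ) (s'/θ - (d:ℝ)) z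
            ≤ (Gf μ (2/θ₁) (s₁/θ₁ - d) z) ^ α *
              ((ENNReal.ofReal C) ^ γ * ENNReal.ofReal ‖z‖ ^ e) :=
              far_pointwise hθ hθ₁ hα0 hγ0 (by rw [hγ]; ring) hC hz1
          _ = (ENNReal.ofReal C) ^ γ *
              ((Gf μ (2/θ₁) (s₁/θ₁ - (d:ℝ)) z) ^ α * ENNReal.ofReal ‖z‖ ^ e) := by
              ring
    apply lt_of_le_of_lt step1
    apply ENNReal.mul_lt_top (lt_top_iff_ne_top.mpr hKne)
    rcases eq_or_lt_of_le hα0 with hα | hαpos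
    · -- α = 0
      subst hα
      simp_rw [ENNReal.rpow_zero, one_mul]
      apply norm_rpow_far
      rw [he, hγ]; rw [hγ] at hE
      ring_nf
      ring_nf at hE
      linarith
    · -- 0 < α < 1: Hölder
      have hαne : α ≠ 0 := ne_of_gt hαpos
      have h1α : 0 < 1 - α := by linarith
      have hconj : (α⁻¹).HolderConjugate ((1-α)⁻¹) := by
        refine ⟨?_, inv_pos.mpr hαpos, inv_pos.mpr h1α⟩
        rw [inv_inv, inv_inv, inv_one]; ring
      have hmeas1 : AEMeasurable (fun z => (Gf μ (2/θ₁) (s₁/θ₁ - (d:ℝ)) z) ^ α)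
          (volume.restrict R) := ((Gf_meas μ _ _).pow_const _).aemeasurable
      have hmeas2 : AEMeasurable (fun z => ENNReal.ofReal ‖z‖ ^ e)
          (volume.restrict R) :=
        ((ENNReal.measurable_ofReal.comp measurable_norm).pow_const _).aemeasurable
      have holder := ENNReal.lintegral_mul_le_Lp_mul_Lq (volume.restrict R) hconj hmeas1 hmeas2
      simp only [Pi.mul_apply] at holder
      apply lt_of_le_of_lt holder
      apply ENNReal.mul_lt_top
      · -- first factor
        have heq : ∀ z : Ed d, ((Gf μ (2/θ₁) (s₁/θ₁ - (d:ℝ)) z) ^ α) ^ (α⁻¹) =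
            Gf μ (2/θ₁) (s₁/θ₁ - (d:ℝ)) z := by
          intro z
          rw [← ENNReal.rpow_mul, mul_inv_cancel₀ hαne, ENNReal.rpow_one]
        simp_rw [heq]
        rw [one_div, inv_inv]
        apply ENNReal.rpow_lt_top_of_nonneg hα0
        apply ne_of_lt
        exact lt_of_le_of_lt (lintegral_mono_set (subset_univ R) |>.trans
          (by rw [Measure.restrict_univ])) (hI hαne)
      · -- second factor
        have heq : ∀ z : Ed d, (ENNReal.ofReal ‖z‖ ^ e) ^ ((1-α)⁻¹) =
            ENNReal.ofReal ‖z‖ ^ (e * (1-α)⁻¹) := by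
          intro z
          rw [← ENNReal.rpow_mul]
        simp_rw [heq]
        rw [one_div, inv_inv]
        apply ENNReal.rpow_lt_top_of_nonneg (by linarith)
        apply ne_of_lt
        apply norm_rpow_far
        have h2 : e < -(d:ℝ) * (1-α) := by
          rw [he]
          ring_nf
          ring_nf at hE
          linarith
        calc e * (1-α)⁻¹ < (-(d:ℝ) * (1-α)) * (1-α)⁻¹ :=
              mul_lt_mul_of_pos_right h2 (inv_pos.mpr h1α)
          _ = -(d:ℝ) := by field_simp

lemma keyfin2 {μ : Measure (Ed d)} [IsFiniteMeasure μ] (hd : 1 ≤ d)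
    {θ₀ θ₁ l s₀ s₁ : ℝ}
    (hθ₀ : 0 < θ₀) (hθ₁ : 0 < θ₁) (hl0 : 0 < l) (hl1 : l < 1)
    (hI₀ : (∫⁻ z, Gf μ (2/θ₀) (s₀/θ₀ - (d:ℝ)) z) < ⊤)
    (hI₁ : (∫⁻ z, Gf μ (2/θ₁) (s₁/θ₁ - (d:ℝ)) z) < ⊤) :
    (∫⁻ z, Gf μ (2/(l*θ₀+(1-l)*θ₁)) ((l*s₀+(1-l)*s₁)/(l*θ₀+(1-l)*θ₁) - (d:ℝ)) z) < ⊤ := by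
  set θ : ℝ := l*θ₀+(1-l)*θ₁ with hθdef
  have hθ : 0 < θ := by
    have h1 : 0 < l*θ₀ := by positivity
    have h2 : 0 < (1-l)*θ₁ := by
      apply mul_pos (by linarith) hθ₁
    linarith
  set s : ℝ := l*s₀+(1-l)*s₁ with hsdef
  set a : ℝ := l*θ₀/θ with hadef
  set b : ℝ := (1-l)*θ₁/θ with hbdef
  have hab : a + b = 1 := by
    rw [hadef, hbdef, ← add_div, hθdef]
    field_simp
    exact div_self hθ.ne'
  have ha0 : 0 < a := by positivity
  have hb0 : 0 < b := by
    apply div_pos (mul_pos (by linarith) hθ₁) hθ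
  have ha1 : a < 1 := by linarith
  have hb1 : b < 1 := by linarith
  have hpoint : ∀ z : Ed d, z ≠ 0 →
      Gf μ (2/θ) (s/θ - (d:ℝ)) z ≤
        (Gf μ (2/θ₀) (s₀/θ₀ - (d:ℝ)) z) ^ a * (Gf μ (2/θ₁) (s₁/θ₁ - (d:ℝ)) z) ^ b := by
    intro z hz
    set A : ℝ≥0∞ := ENNReal.ofReal (‖ftm μ z‖) with hA
    set N : ℝ≥0∞ := ENNReal.ofReal ‖z‖ with hN
    have hNne0 : N ≠ 0 := by
      rw [hN, Ne, ENNReal.ofReal_eq_zero, not_le]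
      exact norm_pos_iff.mpr hz
    have hNnetop : N ≠ ⊤ := ENNReal.ofReal_ne_top
    rcases eq_or_lt_of_le (norm_nonneg (ftm μ z)) with h0 | h0
    · have hA0 : A = 0 := by rw [hA, ← h0, ENNReal.ofReal_zero]
      unfold Gf
      rw [← hA, ← hN, hA0, ENNReal.zero_rpow_of_pos (by positivity), zero_mul]
      exact zero_le
    · have hAne0 : A ≠ 0 := by
        rw [hA, Ne, ENNReal.ofReal_eq_zero, not_le]; exact h0
      have hAnetop : A ≠ ⊤ := ENNReal.ofReal_ne_top
      apply le_of_eq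
      unfold Gf
      rw [← hA, ← hN]
      have e1 : (2:ℝ)/θ = (2/θ₀)*a + (2/θ₁)*b := by
        rw [hadef, hbdef]
        field_simp
        ring
      have e2 : s/θ - (d:ℝ) = (s₀/θ₀ - d)*a + (s₁/θ₁ - d)*b := by
        have : (s₀/θ₀ - (d:ℝ))*a + (s₁/θ₁ - d)*b = (s₀/θ₀)*a + (s₁/θ₁)*b - d*(a+b) := by
          ring
        rw [this, hab, hadef, hbdef, hsdef]
        field_simp
      rw [e1, e2]
      rw [ENNReal.rpow_add _ _ hAne0 hAnetop, ENNReal.rpow_add _ _ hNne0 hNnetop]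
      rw [ENNReal.mul_rpow_of_nonneg _ _ ha0.le, ENNReal.mul_rpow_of_nonneg _ _ hb0.le]
      rw [ENNReal.rpow_mul, ENNReal.rpow_mul, ENNReal.rpow_mul, ENNReal.rpow_mul]
      ring
  have hconj : (a⁻¹).HolderConjugate (b⁻¹) := by
    refine ⟨?_, inv_pos.mpr ha0, inv_pos.mpr hb0⟩
    rw [inv_inv, inv_inv, hab, inv_one]
  have hmeas0 : AEMeasurable (fun z => (Gf μ (2/θ₀) (s₀/θ₀ - (d:ℝ)) z) ^ a)
      (volume : Measure (Ed d)) := ((Gf_meas μ _ _).pow_const _).aemeasurable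
  have hmeas1 : AEMeasurable (fun z => (Gf μ (2/θ₁) (s₁/θ₁ - (d:ℝ)) z) ^ b)
      (volume : Measure (Ed d)) := ((Gf_meas μ _ _).pow_const _).aemeasurable
  have holder := ENNReal.lintegral_mul_le_Lp_mul_Lq (volume : Measure (Ed d)) hconj hmeas0 hmeas1
  simp only [Pi.mul_apply] at holder
  calc ∫⁻ z, Gf μ (2/θ) (s/θ - (d:ℝ)) z
      ≤ ∫⁻ z, (Gf μ (2/θ₀) (s₀/θ₀ - (d:ℝ)) z) ^ a * (Gf μ (2/θ₁) (s₁/θ₁ - (d:ℝ)) z) ^ b := by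
        apply lintegral_mono_ae
        filter_upwards [ae_ne_zero hd] with z hz
        exact hpoint z hz
    _ ≤ (∫⁻ z, ((Gf μ (2/θ₀) (s₀/θ₀ - (d:ℝ)) z) ^ a) ^ (a⁻¹)) ^ (1/(a⁻¹)) *
        (∫⁻ z, ((Gf μ (2/θ₁) (s₁/θ₁ - (d:ℝ)) z) ^ b) ^ (b⁻¹)) ^ (1/(b⁻¹)) := holder
    _ < ⊤ := by
        have e0 : ∀ z : Ed d, ((Gf μ (2/θ₀) (s₀/θ₀ - (d:ℝ)) z) ^ a) ^ (a⁻¹) =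
            Gf μ (2/θ₀) (s₀/θ₀ - (d:ℝ)) z := by
          intro z
          rw [← ENNReal.rpow_mul, mul_inv_cancel₀ ha0.ne', ENNReal.rpow_one]
        have e1 : ∀ z : Ed d, ((Gf μ (2/θ₁) (s₁/θ₁ - (d:ℝ)) z) ^ b) ^ (b⁻¹) =
            Gf μ (2/θ₁) (s₁/θ₁ - (d:ℝ)) z := by
          intro z
          rw [← ENNReal.rpow_mul, mul_inv_cancel₀ hb0.ne', ENNReal.rpow_one]
        simp_rw [e0, e1]
        rw [one_div, inv_inv, one_div, inv_inv]
        exact ENNReal.mul_lt_top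
          (ENNReal.rpow_lt_top_of_nonneg ha0.le hI₀.ne)
          (ENNReal.rpow_lt_top_of_nonneg hb0.le hI₁.ne)

lemma prop2 {μ : Measure (Ed d)} [IsFiniteMeasure μ] (hd : 1 ≤ d)
    {θ θ₁ l s₀ s₁ s' C : ℝ}
    (hθ : 0 < θ) (hθ₁ : 0 < θ₁) (hl0 : 0 ≤ l) (hl1 : l ≤ 1) (hθge : (1-l)*θ₁ ≤ θ)
    (hs₀ : 0 ≤ s₀) (hs₁ : 0 ≤ s₁)
    (hC : ∀ z, ‖ftm μ z‖ ^ 2 * ‖z‖ ^ s₀ ≤ C)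
    (hI₁ : l ≠ 1 → (∫⁻ z, Gf μ (2/θ₁) (s₁/θ₁ - (d:ℝ)) z) < ⊤)
    (hs'0 : 0 < s') (hs' : s' < l*s₀ + (1-l)*s₁) :
    (∫⁻ z, Gf μ (2/θ) (s'/θ - (d:ℝ)) z) < ⊤ := by
  set δ : ℝ := l*s₀ + (1-l)*s₁ - s' with hδdef
  have hδ : 0 < δ := by linarith
  set ε : ℝ := min (1/2) (δ / (2*((1-l)*s₁) + 1)) with hεdef
  have hls₁ : 0 ≤ (1-l)*s₁ := mul_nonneg (by linarith) hs₁
  have hεpos : 0 < ε := by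
    apply lt_min (by norm_num)
    positivity
  have hεhalf : ε ≤ 1/2 := min_le_left _ _
  have hεδ : ε * ((1-l)*s₁) < δ := by
    have h1 : ε ≤ δ / (2*((1-l)*s₁) + 1) := min_le_right _ _
    have h2 : ε * ((1-l)*s₁) ≤ (δ / (2*((1-l)*s₁) + 1)) * ((1-l)*s₁) :=
      mul_le_mul_of_nonneg_right h1 hls₁
    have h3 : (δ / (2*((1-l)*s₁) + 1)) * ((1-l)*s₁) < δ := by
      rw [div_mul_eq_mul_div, div_lt_iff₀ (by linarith)]
      nlinarith
    linarith
  set α : ℝ := (1-ε)*(1-l)*θ₁/θ with hαdef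
  have hfrac : (1-l)*θ₁/θ ≤ 1 := by
    rw [div_le_one hθ]
    exact hθge
  have hα0 : 0 ≤ α := by
    apply div_nonneg _ hθ.le
    exact mul_nonneg (mul_nonneg (by linarith) (by linarith)) hθ₁.le
  have hα1 : α < 1 := by
    have h1 : α = (1-ε) * ((1-l)*θ₁/θ) := by rw [hαdef]; ring
    calc α ≤ (1-ε) * 1 := by
          rw [h1]
          apply mul_le_mul_of_nonneg_left hfrac (by linarith)
      _ < 1 := by linarith
  have hαθ : α/θ₁ = (1-ε)*(1-l)/θ := by
    rw [hαdef]
    field_simp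
  have hγeq : 1/θ - α/θ₁ = (1-(1-ε)*(1-l))/θ := by
    rw [hαθ]
    ring
  have hγ0 : 0 ≤ 1/θ - α/θ₁ := by
    rw [hγeq]
    apply div_nonneg _ hθ.le
    nlinarith
  have hE : s'/θ - α * (s₁/θ₁) - (1/θ - α/θ₁) * s₀ < 0 := by
    have e1 : s'/θ - α * (s₁/θ₁) - (1/θ - α/θ₁) * s₀
        = (s' - (1-ε)*((1-l)*s₁) - (1-(1-ε)*(1-l))*s₀)/θ := by
      rw [hγeq, hαdef]
      field_simp
    rw [e1]
    apply div_neg_of_neg_of_pos _ hθ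
    have h4 : l ≤ 1-(1-ε)*(1-l) := by nlinarith
    have h5 : l*s₀ ≤ (1-(1-ε)*(1-l))*s₀ := mul_le_mul_of_nonneg_right h4 hs₀
    nlinarith
  apply keyfin hd hθ hθ₁ hα0 hα1 hγ0 hs'0 hE hC
  intro hαne
  apply hI₁
  intro hleq
  apply hαne
  rw [hαdef, hleq]
  simp

lemma rpow_le_max {y s s₀ s₁ : ℝ} (hy : 0 ≤ y) (hs₀ : 0 ≤ s₀) (hs₁ : 0 ≤ s₁)
    (h0 : min s₀ s₁ ≤ s) (h1 : s ≤ max s₀ s₁) : y ^ s ≤ max (y ^ s₀) (y ^ s₁) := by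
  rcases eq_or_lt_of_le hy with h | hypos
  · subst h
    rcases eq_or_lt_of_le (le_trans (le_min hs₀ hs₁) h0) with hs | hs
    · rw [← hs, Real.rpow_zero]
      rcases le_total s₀ s₁ with hc | hc
      · have h₀0 : s₀ = 0 := le_antisymm (by rw [min_eq_left hc] at h0; linarith) hs₀
        rw [h₀0, Real.rpow_zero]
        exact le_max_left _ _
      · have h₁0 : s₁ = 0 := le_antisymm (by rw [min_eq_right hc] at h0; linarith) hs₁
        rw [h₁0, Real.rpow_zero]
        exact le_max_right _ _
    · rw [Real.zero_rpow (ne_of_gt hs)]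
      exact le_max_of_le_left (Real.rpow_nonneg le_rfl _)
  · rcases le_total y 1 with hy1 | hy1
    · rcases le_total s₀ s₁ with hc | hc
      · apply le_max_of_le_left
        apply Real.rpow_le_rpow_of_exponent_ge hypos hy1
        rw [min_eq_left hc] at h0
        exact h0
      · apply le_max_of_le_right
        apply Real.rpow_le_rpow_of_exponent_ge hypos hy1
        rw [min_eq_right hc] at h0
        exact h0
    · rcases le_total s₀ s₁ with hc | hc
      · apply le_max_of_le_right
        apply Real.rpow_le_rpow_of_exponent_le hy1
        rw [max_eq_right hc] at h1
        exact h1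
      · apply le_max_of_le_left
        apply Real.rpow_le_rpow_of_exponent_le hy1
        rw [max_eq_left hc] at h1
        exact h1

lemma abs_sq_nonneg {μ : Measure (Ed d)} (z : Ed d) (s : ℝ) :
    0 ≤ ‖ftm μ z‖ ^ 2 * ‖z‖ ^ s :=
  mul_nonneg (pow_nonneg (norm_nonneg _) 2) (Real.rpow_nonneg (norm_nonneg _) _)

lemma sup_bound {μ : Measure (Ed d)} {s₀ : ℝ} (h : energyJ μ s₀ 0 < ⊤) :
    ∀ z, ‖ftm μ z‖ ^ 2 * ‖z‖ ^ s₀ ≤ (energyJ μ s₀ 0).toReal := by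
  intro z
  have h1 : ENNReal.ofReal (‖ftm μ z‖ ^ 2 * ‖z‖ ^ s₀) ≤ energyJ μ s₀ 0 := by
    rw [energyJ, if_pos rfl]
    exact le_iSup (fun z : Ed d => ENNReal.ofReal (‖ftm μ z‖ ^ 2 * ‖z‖ ^ s₀)) z
  calc ‖ftm μ z‖ ^ 2 * ‖z‖ ^ s₀
      = (ENNReal.ofReal (‖ftm μ z‖ ^ 2 * ‖z‖ ^ s₀)).toReal :=
        (ENNReal.toReal_ofReal (abs_sq_nonneg z s₀)).symm
    _ ≤ (energyJ μ s₀ 0).toReal := ENNReal.toReal_mono h.ne h1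

lemma hC0 (μ : Measure (Ed d)) [IsFiniteMeasure μ] :
    ∀ z, ‖ftm μ z‖ ^ 2 * ‖z‖ ^ (0:ℝ) ≤ ((μ univ).toReal) ^ 2 := by
  intro z
  rw [Real.rpow_zero, mul_one]
  exact pow_le_pow_left₀ (norm_nonneg _) (ftm_bound μ z) 2

lemma sup_interp {μ : Measure (Ed d)} {s₀ s₁ t : ℝ} (hs₀ : 0 ≤ s₀) (hs₁ : 0 ≤ s₁)
    (h₀ : energyJ μ s₀ 0 < ⊤) (h₁ : energyJ μ s₁ 0 < ⊤)
    (hmin : min s₀ s₁ ≤ t) (hmax : t ≤ max s₀ s₁) : energyJ μ t 0 < ⊤ := by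
  have key : ∀ z : Ed d, ENNReal.ofReal (‖ftm μ z‖ ^ 2 * ‖z‖ ^ t) ≤
      max (energyJ μ s₀ 0) (energyJ μ s₁ 0) := by
    intro z
    have h2 : ‖ftm μ z‖ ^ 2 * ‖z‖ ^ t ≤
        max (‖ftm μ z‖ ^ 2 * ‖z‖ ^ s₀) (‖ftm μ z‖ ^ 2 * ‖z‖ ^ s₁) := by
      rw [← mul_max_of_nonneg _ _ (pow_nonneg (norm_nonneg _) 2)]
      exact mul_le_mul_of_nonneg_left (rpow_le_max (norm_nonneg _) hs₀ hs₁ hmin hmax)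
        (pow_nonneg (norm_nonneg _) 2)
    calc ENNReal.ofReal (‖ftm μ z‖ ^ 2 * ‖z‖ ^ t)
        ≤ ENNReal.ofReal (max (‖ftm μ z‖ ^ 2 * ‖z‖ ^ s₀)
            (‖ftm μ z‖ ^ 2 * ‖z‖ ^ s₁)) := ENNReal.ofReal_le_ofReal h2
      _ = max (ENNReal.ofReal (‖ftm μ z‖ ^ 2 * ‖z‖ ^ s₀))
            (ENNReal.ofReal (‖ftm μ z‖ ^ 2 * ‖z‖ ^ s₁)) :=
          Monotone.map_max (fun _ _ h => ENNReal.ofReal_le_ofReal h)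
      _ ≤ max (energyJ μ s₀ 0) (energyJ μ s₁ 0) := by
          apply max_le_max
          · rw [energyJ, if_pos rfl]
            exact le_iSup (fun z : Ed d => ENNReal.ofReal (‖ftm μ z‖ ^ 2 * ‖z‖ ^ s₀)) z
          · rw [energyJ, if_pos rfl]
            exact le_iSup (fun z : Ed d => ENNReal.ofReal (‖ftm μ z‖ ^ 2 * ‖z‖ ^ s₁)) z
  calc energyJ μ t 0 = ⨆ z : Ed d, ENNReal.ofReal (‖ftm μ z‖ ^ 2 * ‖z‖ ^ t) := by
        rw [energyJ, if_pos rfl]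
    _ ≤ max (energyJ μ s₀ 0) (energyJ μ s₁ 0) := iSup_le key
    _ < ⊤ := max_lt h₀ h₁

lemma le_dimF' {μ : Measure (Ed d)} {θ t : ℝ} (ht : 0 ≤ t) (h : energyJ μ t θ < ⊤) :
    ENNReal.ofReal t ≤ dimF μ θ := by
  have h2 : energyJ μ ((t.toNNReal : ℝ≥0) : ℝ) θ < ⊤ := by
    rwa [Real.coe_toNNReal t ht]
  have h3 : ((t.toNNReal : ℝ≥0) : ℝ≥0∞) ≤ dimF μ θ := by
    rw [dimF]
    exact le_iSup₂ (f := fun (s : ℝ≥0) (_ : energyJ μ (s:ℝ) θ < ⊤) => (s : ℝ≥0∞))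
      t.toNNReal h2
  exact h3

lemma dimF_ge' {μ : Measure (Ed d)} {θ : ℝ} {t : ℝ≥0∞}
    (h : ∀ u : ℝ, 0 < u → ENNReal.ofReal u < t → energyJ μ u θ < ⊤) : t ≤ dimF μ θ := by
  apply ENNReal.le_of_forall_nnreal_lt
  intro r hr
  rcases eq_or_ne r 0 with rfl | hr0
  · simp
  · have hrpos : 0 < (r:ℝ) := by
      have := pos_iff_ne_zero.mpr hr0
      exact_mod_cast this
    have h2 := h r hrpos (by rwa [ENNReal.ofReal_coe_nnreal])
    have := le_dimF' hrpos.le h2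
    rwa [ENNReal.ofReal_coe_nnreal] at this

lemma dimF_le_iff {μ : Measure (Ed d)} {θ : ℝ} {c : ℝ≥0∞} :
    dimF μ θ ≤ c ↔ ∀ s : ℝ≥0, energyJ μ s θ < ⊤ → (s:ℝ≥0∞) ≤ c := by
  rw [dimF]
  exact iSup₂_le_iff

lemma Ptrans {μ : Measure (Ed d)} [IsFiniteMeasure μ] (hd : 1 ≤ d)
    {θ θ₁ l s₀ s₁ s' C : ℝ}
    (hθ : 0 < θ) (hθ₁ : 0 < θ₁) (hl0 : 0 ≤ l) (hl1 : l ≤ 1) (hθge : (1-l)*θ₁ ≤ θ)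
    (hs₀ : 0 ≤ s₀) (hs₁ : 0 ≤ s₁)
    (hC : ∀ z, ‖ftm μ z‖ ^ 2 * ‖z‖ ^ s₀ ≤ C)
    (hP₁ : l ≠ 1 → energyJ μ s₁ θ₁ < ⊤)
    (hs'0 : 0 < s') (hs' : s' < l*s₀ + (1-l)*s₁) : energyJ μ s' θ < ⊤ := by
  rw [energy_lt_top_iff hd hθ]
  exact prop2 hd hθ hθ₁ hl0 hl1 hθge hs₀ hs₁ hC
    (fun h => (energy_lt_top_iff hd hθ₁).mp (hP₁ h)) hs'0 hs'

lemma dimF_mono (hd : 1 ≤ d) (μ : Measure (Ed d)) [IsFiniteMeasure μ] :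
    MonotoneOn (fun θ => dimF μ θ) (Icc (0:ℝ) 1) := by
  intro a ha b hb hab
  rcases eq_or_lt_of_le hab with rfl | hlt
  · exact le_refl _
  have hb0 : 0 < b := lt_of_le_of_lt ha.1 hlt
  simp only
  apply dimF_le_iff.mpr
  intro s hs
  apply dimF_ge' (t := (s:ℝ≥0∞))
  intro u hu0 hu
  have hus : u < (s:ℝ) := by
    rw [← ENNReal.ofReal_coe_nnreal (p := s)] at hu
    exact (ENNReal.ofReal_lt_ofReal_iff_of_nonneg hu0.le).mp hu
  rcases eq_or_lt_of_le ha.1 with haz | hapos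
  · have hs0 : energyJ μ (s:ℝ) 0 < ⊤ := by rw [haz]; exact hs
    exact Ptrans hd hb0 one_pos (l := 1) (s₀ := (s:ℝ)) (s₁ := 0) zero_le_one le_rfl
      (by rw [sub_self, zero_mul]; exact hb0.le) s.coe_nonneg le_rfl (sup_bound hs0)
      (fun h => absurd rfl h) hu0 (by linarith)
  · exact Ptrans hd hb0 hapos (l := 0) (s₀ := 0) (s₁ := (s:ℝ)) le_rfl zero_le_one
      (by linarith) le_rfl s.coe_nonneg (hC0 μ) (fun _ => hs) hu0 (by linarith)

lemma dimF_scale (hd : 1 ≤ d) (μ : Measure (Ed d)) [IsFiniteMeasure μ]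
    {a b : ℝ} (ha : 0 < a) (hab : a ≤ b) (hb : b ≤ 1) :
    ENNReal.ofReal (a/b) * dimF μ b ≤ dimF μ a := by
  have hb0 : 0 < b := lt_of_lt_of_le ha hab
  have hfr0 : 0 ≤ a/b := div_nonneg ha.le hb0.le
  have hfr1 : a/b ≤ 1 := (div_le_one hb0).mpr hab
  conv_lhs => rw [dimF]
  rw [ENNReal.mul_iSup]
  apply iSup_le; intro s
  rw [ENNReal.mul_iSup]
  apply iSup_le; intro hs
  have heq : ENNReal.ofReal (a/b) * (s:ℝ≥0∞) = ENNReal.ofReal ((a/b) * s) := by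
    rw [ENNReal.ofReal_mul hfr0, ENNReal.ofReal_coe_nnreal]
  rw [heq]
  apply dimF_ge'
  intro u hu0 hu
  have hus : u < (a/b) * s := (ENNReal.ofReal_lt_ofReal_iff_of_nonneg hu0.le).mp hu
  apply Ptrans hd ha hb0 (l := 1 - a/b) (s₀ := 0) (s₁ := (s:ℝ)) (by linarith) (by linarith)
    (by rw [show (1:ℝ)-(1-a/b) = a/b by ring, div_mul_cancel₀ _ hb0.ne'])
    le_rfl s.coe_nonneg (hC0 μ) (fun _ => hs) hu0 (by rw [show (1:ℝ)-(1-a/b) = a/b by ring]; linarith)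

lemma P00 (μ : Measure (Ed d)) [IsFiniteMeasure μ] : energyJ μ 0 0 < ⊤ := by
  rw [energyJ, if_pos rfl]
  calc (⨆ z : Ed d, ENNReal.ofReal (‖ftm μ z‖ ^ 2 * ‖z‖ ^ (0:ℝ)))
      ≤ ENNReal.ofReal (((μ univ).toReal) ^ 2) :=
        iSup_le fun z => ENNReal.ofReal_le_ofReal (hC0 μ z)
    _ < ⊤ := ENNReal.ofReal_lt_top

lemma helper_one {μ : Measure (Ed d)} [IsFiniteMeasure μ] (hd : 1 ≤ d)
    {θ₀ θ₁ l : ℝ} (h₀ : θ₀ ∈ Icc (0:ℝ) 1) (h₁ : θ₁ ∈ Icc (0:ℝ) 1)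
    (hl : l ∈ Icc (0:ℝ) 1) (hl1 : l < 1)
    {s₁ : ℝ≥0} (hP₁ : energyJ μ (s₁:ℝ) θ₁ < ⊤) :
    ENNReal.ofReal (1-l) * (s₁ : ℝ≥0∞) ≤ dimF μ (l*θ₀+(1-l)*θ₁) := by
  have hw0 : 0 ≤ 1 - l := by linarith
  have heq : ENNReal.ofReal (1-l) * (s₁:ℝ≥0∞) = ENNReal.ofReal ((1-l) * s₁) := by
    rw [ENNReal.ofReal_mul hw0, ENNReal.ofReal_coe_nnreal]
  rw [heq]
  rcases eq_or_lt_of_le (show 0 ≤ l*θ₀+(1-l)*θ₁ by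
      have := mul_nonneg hl.1 h₀.1
      have := mul_nonneg hw0 h₁.1
      linarith) with hθz | hθpos
  · -- θ = 0 : then θ₁ = 0 (since (1-l)θ₁ ≤ 0 and both factors nonneg, 1-l>0)
    have hθ₁0 : θ₁ = 0 := by
      by_contra hne
      have h2 : 0 < θ₁ := lt_of_le_of_ne h₁.1 (Ne.symm hne)
      have h3 : 0 < (1-l)*θ₁ := mul_pos (by linarith) h2
      have h4 : 0 ≤ l*θ₀ := mul_nonneg hl.1 h₀.1
      linarith
    apply le_dimF' (mul_nonneg hw0 s₁.coe_nonneg)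
    have hP₁0 : energyJ μ (s₁:ℝ) 0 < ⊤ := by rw [hθ₁0] at hP₁; exact hP₁
    have hmin : min (0:ℝ) (s₁:ℝ) ≤ (1-l)*(s₁:ℝ) := by
      rw [min_eq_left s₁.coe_nonneg]
      exact mul_nonneg hw0 s₁.coe_nonneg
    have hmax : (1-l)*(s₁:ℝ) ≤ max (0:ℝ) (s₁:ℝ) := by
      rw [max_eq_right s₁.coe_nonneg]
      nlinarith [mul_nonneg hl.1 s₁.coe_nonneg]
    have hfin := sup_interp le_rfl s₁.coe_nonneg (P00 μ) hP₁0 hmin hmax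
    rw [← hθz]
    exact hfin
  · rcases eq_or_lt_of_le h₁.1 with hθ₁z | hθ₁pos
    · -- θ₁ = 0 : sup extraction
      have hP₁' : energyJ μ (s₁:ℝ) 0 < ⊤ := by rw [hθ₁z]; exact hP₁
      apply dimF_ge'
      intro u hu0 hu
      have hus : u < (1-l) * s₁ := (ENNReal.ofReal_lt_ofReal_iff_of_nonneg hu0.le).mp hu
      have hb1 : (1-l) * (s₁:ℝ) ≤ (s₁:ℝ) := by
        nlinarith [mul_nonneg hl.1 s₁.coe_nonneg]
      exact Ptrans hd hθpos one_pos (l := 1) (s₀ := (s₁:ℝ)) (s₁ := 0) zero_le_one le_rfl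
        (by rw [sub_self, zero_mul]; exact hθpos.le) s₁.coe_nonneg le_rfl (sup_bound hP₁')
        (fun h => absurd rfl h) hu0 (by linarith)
    · -- θ₁ > 0
      apply dimF_ge'
      intro u hu0 hu
      have hus : u < (1-l) * s₁ := (ENNReal.ofReal_lt_ofReal_iff_of_nonneg hu0.le).mp hu
      exact Ptrans hd hθpos hθ₁pos (l := l) (s₀ := 0) (s₁ := (s₁:ℝ)) hl.1 hl.2
        (by linarith [mul_nonneg hl.1 h₀.1]) le_rfl s₁.coe_nonneg (hC0 μ)
        (fun _ => hP₁) hu0 (by linarith)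

lemma dimF_concave (hd : 1 ≤ d) (μ : Measure (Ed d)) [IsFiniteMeasure μ] :
    ∀ θ₀ ∈ Icc (0:ℝ) 1, ∀ θ₁ ∈ Icc (0:ℝ) 1, ∀ l ∈ Icc (0:ℝ) 1,
      ENNReal.ofReal l * dimF μ θ₀ + ENNReal.ofReal (1-l) * dimF μ θ₁ ≤
        dimF μ (l*θ₀+(1-l)*θ₁) := by
  intro θ₀ h₀ θ₁ h₁ l hl
  obtain ⟨hl0, hl1⟩ := hl
  rcases eq_or_lt_of_le hl0 with hlz | hl0pos
  · rw [← hlz, show (0:ℝ)*θ₀+(1-0)*θ₁ = θ₁ by ring]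
    simp
  rcases eq_or_lt_of_le hl1 with hlo | hl1lt
  · subst hlo
    rw [show (1:ℝ)*θ₀+(1-1)*θ₁ = θ₀ by ring]
    simp
  have hw0 : 0 ≤ 1 - l := by linarith
  have hw0' : 0 < 1 - l := by linarith
  set D := dimF μ (l*θ₀+(1-l)*θ₁) with hD
  simp only [dimF]
  rw [ENNReal.mul_iSup, ENNReal.mul_iSup, ENNReal.iSup_add]
  apply iSup_le; intro s₀
  rw [ENNReal.add_iSup]
  apply iSup_le; intro s₁
  by_cases hP₀ : energyJ μ (s₀:ℝ) θ₀ < ⊤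
  · rw [iSup_pos hP₀]
    by_cases hP₁ : energyJ μ (s₁:ℝ) θ₁ < ⊤
    · rw [iSup_pos hP₁]
      -- main case TT
      have hcombo : ENNReal.ofReal l * (s₀:ℝ≥0∞) + ENNReal.ofReal (1-l) * (s₁:ℝ≥0∞) =
          ENNReal.ofReal (l*(s₀:ℝ)+(1-l)*(s₁:ℝ)) := by
        rw [ENNReal.ofReal_add (mul_nonneg hl0 s₀.coe_nonneg) (mul_nonneg hw0 s₁.coe_nonneg),
          ENNReal.ofReal_mul hl0, ENNReal.ofReal_mul hw0, ENNReal.ofReal_coe_nnreal,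
          ENNReal.ofReal_coe_nnreal]
      rw [hcombo, hD]
      have ht0 : 0 ≤ l*(s₀:ℝ)+(1-l)*(s₁:ℝ) :=
        add_nonneg (mul_nonneg hl0 s₀.coe_nonneg) (mul_nonneg hw0 s₁.coe_nonneg)
      rcases eq_or_lt_of_le h₀.1 with hz₀ | hp₀ <;> rcases eq_or_lt_of_le h₁.1 with hz₁ | hp₁
      · -- θ₀ = θ₁ = 0
        apply le_dimF' ht0
        rw [show l*θ₀+(1-l)*θ₁ = 0 by rw [← hz₀, ← hz₁]; ring]
        have hP₀' : energyJ μ (s₀:ℝ) 0 < ⊤ := by rw [hz₀]; exact hP₀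
        have hP₁' : energyJ μ (s₁:ℝ) 0 < ⊤ := by rw [hz₁]; exact hP₁
        apply sup_interp s₀.coe_nonneg s₁.coe_nonneg hP₀' hP₁'
        · rcases le_total (s₀:ℝ) (s₁:ℝ) with hc | hc
          · rw [min_eq_left hc]; nlinarith
          · rw [min_eq_right hc]; nlinarith
        · rcases le_total (s₀:ℝ) (s₁:ℝ) with hc | hc
          · rw [max_eq_right hc]; nlinarith
          · rw [max_eq_left hc]; nlinarith
      · -- θ₀ = 0 < θ₁
        have hθpos : 0 < l*θ₀+(1-l)*θ₁ := by
          have := mul_pos hw0' hp₁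
          have := mul_nonneg hl0 h₀.1
          linarith
        have hP₀' : energyJ μ (s₀:ℝ) 0 < ⊤ := by rw [hz₀]; exact hP₀
        apply dimF_ge'
        intro u hu0 hu
        have hus : u < l*(s₀:ℝ)+(1-l)*(s₁:ℝ) :=
          (ENNReal.ofReal_lt_ofReal_iff_of_nonneg hu0.le).mp hu
        exact Ptrans hd hθpos hp₁ (l := l) (s₀ := (s₀:ℝ)) (s₁ := (s₁:ℝ)) hl0 hl1
          (by linarith [mul_nonneg hl0 h₀.1]) s₀.coe_nonneg s₁.coe_nonneg
          (sup_bound hP₀') (fun _ => hP₁) hu0 hus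
      · -- θ₁ = 0 < θ₀
        have hθpos : 0 < l*θ₀+(1-l)*θ₁ := by
          have := mul_pos hl0pos hp₀
          have := mul_nonneg hw0 h₁.1
          linarith
        have hP₁' : energyJ μ (s₁:ℝ) 0 < ⊤ := by rw [hz₁]; exact hP₁
        apply dimF_ge'
        intro u hu0 hu
        have hus : u < l*(s₀:ℝ)+(1-l)*(s₁:ℝ) :=
          (ENNReal.ofReal_lt_ofReal_iff_of_nonneg hu0.le).mp hu
        exact Ptrans hd hθpos hp₀ (l := 1-l) (s₀ := (s₁:ℝ)) (s₁ := (s₀:ℝ)) hw0 (by linarith)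
          (by rw [show (1:ℝ)-(1-l) = l by ring]; linarith [mul_nonneg hw0 h₁.1])
          s₁.coe_nonneg s₀.coe_nonneg (sup_bound hP₁') (fun _ => hP₀) hu0
          (by rw [show (1:ℝ)-(1-l) = l by ring]; linarith)
      · -- both positive
        have hθpos : 0 < l*θ₀+(1-l)*θ₁ := by
          have := mul_pos hl0pos hp₀
          have := mul_nonneg hw0 h₁.1
          linarith
        have hfin := keyfin2 hd hp₀ hp₁ hl0pos hl1lt
          ((energy_lt_top_iff hd hp₀).mp hP₀) ((energy_lt_top_iff hd hp₁).mp hP₁)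
        exact le_dimF' ht0 ((energy_lt_top_iff hd hθpos).mpr hfin)
    · rw [iSup_neg hP₁]
      simp only [bot_eq_zero', mul_zero, add_zero]
      have h2 := helper_one hd h₁ h₀ (l := 1-l) ⟨hw0, by linarith⟩ (by linarith) hP₀
      rw [show (1:ℝ)-(1-l) = l by ring] at h2
      rw [show (1-l)*θ₁+l*θ₀ = l*θ₀+(1-l)*θ₁ by ring] at h2
      exact h2
  · rw [iSup_neg hP₀]
    simp only [bot_eq_zero', mul_zero, zero_add]
    by_cases hP₁ : energyJ μ (s₁:ℝ) θ₁ < ⊤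
    · rw [iSup_pos hP₁]
      exact helper_one hd h₀ h₁ ⟨hl0, hl1⟩ hl1lt hP₁
    · rw [iSup_neg hP₁]
      simp only [bot_eq_zero', mul_zero]
      exact zero_le

lemma cont_of_mono_scale {f : ℝ → ℝ≥0∞}
    (hmono : ∀ a b : ℝ, 0 < a → a ≤ b → b ≤ 1 → f a ≤ f b)
    (hscale : ∀ a b : ℝ, 0 < a → a ≤ b → b ≤ 1 → ENNReal.ofReal (a/b) * f b ≤ f a) :
    ContinuousOn f (Ioc (0:ℝ) 1) := by
  intro x hx
  obtain ⟨hx0, hx1⟩ := hx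
  have lower : ∀ θ ∈ Ioc (0:ℝ) 1, ENNReal.ofReal (min (θ/x) 1) * f x ≤ f θ := by
    intro θ hθ
    rcases le_total θ x with hc | hc
    · calc ENNReal.ofReal (min (θ/x) 1) * f x ≤ ENNReal.ofReal (θ/x) * f x :=
          mul_le_mul_left (ENNReal.ofReal_le_ofReal (min_le_left _ _)) _
        _ ≤ f θ := hscale θ x hθ.1 hc hx1
    · calc ENNReal.ofReal (min (θ/x) 1) * f x ≤ ENNReal.ofReal 1 * f x :=
          mul_le_mul_left (ENNReal.ofReal_le_ofReal (min_le_right _ _)) _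
        _ = f x := by rw [ENNReal.ofReal_one, one_mul]
        _ ≤ f θ := hmono x θ hx0 hc hθ.2
  have upper : ∀ θ ∈ Ioc (0:ℝ) 1, f θ ≤ ENNReal.ofReal (max (θ/x) 1) * f x := by
    intro θ hθ
    rcases le_total θ x with hc | hc
    · calc f θ ≤ f x := hmono θ x hθ.1 hc hx1
        _ = ENNReal.ofReal 1 * f x := by rw [ENNReal.ofReal_one, one_mul]
        _ ≤ ENNReal.ofReal (max (θ/x) 1) * f x :=
          mul_le_mul_left (ENNReal.ofReal_le_ofReal (le_max_right _ _)) _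
    · have h1 : ENNReal.ofReal (x/θ) * f θ ≤ f x := hscale x θ hx0 hc hθ.2
      have hθ0 : 0 < θ := lt_of_lt_of_le hx0 hc
      calc f θ = ENNReal.ofReal (θ/x) * (ENNReal.ofReal (x/θ) * f θ) := by
            rw [← mul_assoc, ← ENNReal.ofReal_mul (by positivity),
              show (θ/x)*(x/θ) = 1 by field_simp, ENNReal.ofReal_one, one_mul]
        _ ≤ ENNReal.ofReal (θ/x) * f x := mul_le_mul_right h1 _
        _ ≤ ENNReal.ofReal (max (θ/x) 1) * f x :=
          mul_le_mul_left (ENNReal.ofReal_le_ofReal (le_max_left _ _)) _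
  have hminT : Tendsto (fun θ : ℝ => ENNReal.ofReal (min (θ/x) 1) * f x)
      (𝓝[Ioc (0:ℝ) 1] x) (𝓝 (f x)) := by
    have h1 : Tendsto (fun θ : ℝ => ENNReal.ofReal (min (θ/x) 1)) (𝓝 x) (𝓝 1) := by
      have hcont : Continuous fun θ : ℝ => ENNReal.ofReal (min (θ/x) 1) :=
        ENNReal.continuous_ofReal.comp ((continuous_id.div_const x).min continuous_const)
      have h2 := hcont.tendsto x
      simpa [div_self hx0.ne'] using h2
    have h2 : Tendsto (fun θ : ℝ => ENNReal.ofReal (min (θ/x) 1) * f x)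
        (𝓝[Ioc (0:ℝ) 1] x) (𝓝 (1 * f x)) :=
      ENNReal.Tendsto.mul_const (h1.mono_left nhdsWithin_le_nhds) (Or.inl one_ne_zero)
    rwa [one_mul] at h2
  have hmaxT : Tendsto (fun θ : ℝ => ENNReal.ofReal (max (θ/x) 1) * f x)
      (𝓝[Ioc (0:ℝ) 1] x) (𝓝 (f x)) := by
    have h1 : Tendsto (fun θ : ℝ => ENNReal.ofReal (max (θ/x) 1)) (𝓝 x) (𝓝 1) := by
      have hcont : Continuous fun θ : ℝ => ENNReal.ofReal (max (θ/x) 1) :=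
        ENNReal.continuous_ofReal.comp ((continuous_id.div_const x).max continuous_const)
      have h2 := hcont.tendsto x
      simpa [div_self hx0.ne'] using h2
    have h2 : Tendsto (fun θ : ℝ => ENNReal.ofReal (max (θ/x) 1) * f x)
        (𝓝[Ioc (0:ℝ) 1] x) (𝓝 (1 * f x)) :=
      ENNReal.Tendsto.mul_const (h1.mono_left nhdsWithin_le_nhds) (Or.inl one_ne_zero)
    rwa [one_mul] at h2
  exact tendsto_of_tendsto_of_tendsto_of_le_of_le' hminT hmaxT
    (eventually_nhdsWithin_of_forall lower) (eventually_nhdsWithin_of_forall upper)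

lemma dimFS_mono_aux (hd : 1 ≤ d) (X : Set (Ed d)) {a b : ℝ}
    (ha : a ∈ Icc (0:ℝ) 1) (hb : b ∈ Icc (0:ℝ) 1) (hab : a ≤ b) :
    dimFS X a ≤ dimFS X b := by
  apply iSup_mono; intro ν
  apply iSup_mono; intro hν
  apply iSup_mono; intro _
  apply iSup_mono; intro _
  haveI := hν
  exact min_le_min (dimF_mono hd ν ha hb hab) le_rfl

lemma dimFS_scale (hd : 1 ≤ d) (X : Set (Ed d)) {a b : ℝ}
    (ha : 0 < a) (hab : a ≤ b) (hb1 : b ≤ 1) :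
    ENNReal.ofReal (a/b) * dimFS X b ≤ dimFS X a := by
  have hb0 : 0 < b := lt_of_lt_of_le ha hab
  rw [dimFS, ENNReal.mul_iSup]
  apply iSup_le; intro ν
  rw [ENNReal.mul_iSup]
  apply iSup_le; intro hν
  rw [ENNReal.mul_iSup]
  apply iSup_le; intro hν2
  rw [ENNReal.mul_iSup]
  apply iSup_le; intro hν3
  haveI := hν
  have hle : ENNReal.ofReal (a/b) * min (dimF ν b) (d:ℝ≥0∞) ≤ min (dimF ν a) (d:ℝ≥0∞) := by
    apply le_min
    · calc ENNReal.ofReal (a/b) * min (dimF ν b) (d:ℝ≥0∞)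
          ≤ ENNReal.ofReal (a/b) * dimF ν b := mul_le_mul_right (min_le_left _ _) _
        _ ≤ dimF ν a := dimF_scale hd ν ha hab hb1
    · calc ENNReal.ofReal (a/b) * min (dimF ν b) (d:ℝ≥0∞)
          ≤ ENNReal.ofReal (a/b) * (d:ℝ≥0∞) := mul_le_mul_right (min_le_right _ _) _
        _ ≤ 1 * (d:ℝ≥0∞) := by
            apply mul_le_mul_left
            exact ENNReal.ofReal_le_one.mpr ((div_le_one hb0).mpr hab)
        _ = (d:ℝ≥0∞) := one_mul _
  refine le_trans hle ?_
  exact le_iSup_of_le ν (le_iSup_of_le hν (le_iSup_of_le hν2 (le_iSup_of_le hν3 le_rfl)))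

/-- For a finite Borel measure `μ` on `ℝ^d`, the Fourier spectrum
`θ ↦ dim_F^θ μ` is non-decreasing and concave on `[0,1]`, hence continuous on `(0,1]`;
and for every non-empty set `X ⊆ ℝ^d`, `θ ↦ dim_F^θ X` is non-decreasing on `[0,1]`
and continuous on `(0,1]`. -/
theorem statement0 {d : ℕ} (hd : 1 ≤ d) (μ : Measure (Ed d)) [IsFiniteMeasure μ] :
    (MonotoneOn (fun θ => dimF μ θ) (Set.Icc (0:ℝ) 1) ∧
      (∀ θ₀ ∈ Set.Icc (0:ℝ) 1, ∀ θ₁ ∈ Set.Icc (0:ℝ) 1, ∀ l ∈ Set.Icc (0:ℝ) 1,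
        ENNReal.ofReal l * dimF μ θ₀ + ENNReal.ofReal (1 - l) * dimF μ θ₁ ≤
          dimF μ (l * θ₀ + (1 - l) * θ₁)) ∧
      ContinuousOn (fun θ => dimF μ θ) (Set.Ioc (0:ℝ) 1)) ∧
    (∀ X : Set (Ed d), X.Nonempty →
      MonotoneOn (fun θ => dimFS X θ) (Set.Icc (0:ℝ) 1) ∧
      ContinuousOn (fun θ => dimFS X θ) (Set.Ioc (0:ℝ) 1)) := by
  constructor
  · refine ⟨dimF_mono hd μ, dimF_concave hd μ, ?_⟩
    apply cont_of_mono_scale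
    · intro a b ha hab hb1
      exact dimF_mono hd μ ⟨ha.le, le_trans hab hb1⟩ ⟨le_trans ha.le hab, hb1⟩ hab
    · intro a b ha hab hb1
      exact dimF_scale hd μ ha hab hb1
  · intro X _hX
    constructor
    · intro a ha b hb hab
      exact dimFS_mono_aux hd X ha hb hab
    · apply cont_of_mono_scale
      · intro a b ha hab hb1
        exact dimFS_mono_aux hd X ⟨ha.le, le_trans hab hb1⟩ ⟨le_trans ha.le hab, hb1⟩ hab
      · intro a b ha hab hb1
        exact dimFS_scale hd X ha hab hb1

end
end

section
/- Let μ be a finite Borel measure on ℝ^d and θ ∈ (0,1]. Then dim_F^θ μ ≥ F̲_μ(θ), where F̲_μ(θ) = liminf_{R→∞} θ·log(R^{−d} ∫_{|z|≤R} |μ̂(z)|^{2/θ} dz)/(−log R). -/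
open MeasureTheory Filter Set
open scoped ENNReal NNReal

noncomputable section

/-- The lower average Fourier dimension
`F̲_μ(θ) = liminf_{R→∞} θ·log(R^{−d} ∫_{|z|≤R} |μ̂(z)|^{2/θ} dz)/(−log R)`. -/
noncomputable def lowerAvgFourierDim {d : ℕ} (μ : Measure (Ed d)) (θ : ℝ) : ℝ :=
  Filter.liminf (fun R : ℝ =>
    θ * Real.log (R ^ (-(d : ℝ)) *
      (∫⁻ z in {z : Ed d | ‖z‖ ≤ R},
        ENNReal.ofReal (‖ftm μ z‖ ^ (2 / θ))).toReal) / (-Real.log R))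
    Filter.atTop

open Metric in
lemma rpow_shell_le {a c x : ℝ} (hc : 0 < c) (h1 : c ≤ x) (h2 : x ≤ 2*c) :
    x ^ a ≤ 2 ^ |a| * ((2*c) ^ a) := by
  have hx : 0 < x := lt_of_lt_of_le hc h1
  have h2c : (0:ℝ) < 2*c := by linarith
  rcases le_or_gt 0 a with ha | ha
  · calc x ^ a ≤ (2*c) ^ a := Real.rpow_le_rpow hx.le h2 ha
      _ ≤ 2 ^ |a| * (2*c) ^ a := by
        nlinarith [Real.one_le_rpow one_le_two (abs_nonneg a), Real.rpow_nonneg h2c.le a]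
  · have h : x ^ a ≤ c ^ a := Real.rpow_le_rpow_of_nonpos hc h1 ha.le
    have hca : c ^ a = 2 ^ |a| * (2*c) ^ a := by
      rw [Real.mul_rpow (by norm_num) hc.le, abs_of_neg ha, ← mul_assoc,
        ← Real.rpow_add two_pos]
      simp
    linarith
open Metric in
lemma tsum_geom_lt_top {q : ℝ} (hq1 : q < 1) (C : ℝ≥0∞) (hC : C ≠ ⊤) :
    ∑' k : ℕ, C * (ENNReal.ofReal q) ^ k < ⊤ := by
  rw [ENNReal.tsum_mul_left, ENNReal.tsum_geometric]
  refine ENNReal.mul_lt_top hC.lt_top ?_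
  rw [ENNReal.inv_lt_top]
  rw [tsub_pos_iff_lt]
  exact ENNReal.ofReal_lt_one.mpr hq1
open Metric in
lemma ftm_abs_le {d : ℕ} (μ : Measure (Ed d)) [IsFiniteMeasure μ] (z : Ed d) :
    ‖ftm μ z‖ ≤ (μ Set.univ).toReal := by
  have h := norm_integral_le_of_norm_le_const (μ := μ)
    (f := fun x : Ed d => Complex.exp (Complex.I * (-2 * Real.pi * (inner ℝ z x : ℝ)))) (C := 1)
    (Filter.Eventually.of_forall fun x => by
      rw [Complex.norm_exp]
      simp)
  simpa [ftm, Measure.real] using h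
open Metric in
lemma rpow_pow_mul {x : ℝ} (hx : 0 ≤ x) (b : ℝ) (k : ℕ) : ((x:ℝ)^k) ^ b = (x ^ b) ^ k := by
  rw [← Real.rpow_natCast x k, ← Real.rpow_mul hx, mul_comm, Real.rpow_mul hx,
    Real.rpow_natCast]
open Metric in
lemma S_le_of_lt {d : ℕ} (μ : Measure (Ed d)) {θ t R : ℝ} (hθ0 : 0 < θ) (ht : 0 < t)
    (hR : 2 ≤ R)
    (hu : t < θ * Real.log (R ^ (-(d:ℝ)) * (∫⁻ z in {z : Ed d | ‖z‖ ≤ R},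
        ENNReal.ofReal (‖ftm μ z‖ ^ (2/θ))).toReal) / (-Real.log R)) :
    (∫⁻ z in {z : Ed d | ‖z‖ ≤ R}, ENNReal.ofReal (‖ftm μ z‖ ^ (2/θ)))
      ≤ ENNReal.ofReal (R ^ ((d:ℝ) - t/θ)) := by
  set S := ∫⁻ z in {z : Ed d | ‖z‖ ≤ R}, ENNReal.ofReal (‖ftm μ z‖ ^ (2/θ))
    with hSdef
  have hR0 : (0:ℝ) < R := by linarith
  have hlogR : 0 < Real.log R := Real.log_pos (by linarith)
  set X := R ^ (-(d:ℝ)) * S.toReal with hX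
  have hXnn : 0 ≤ X := mul_nonneg (Real.rpow_nonneg hR0.le _) ENNReal.toReal_nonneg
  have h1 : θ * Real.log X < t * (-Real.log R) := by
    have := (lt_div_iff_of_neg (by linarith : -Real.log R < 0)).mp hu
    linarith
  have h2 : Real.log X < (t/θ) * (-Real.log R) := by
    have h2' : Real.log X < (t*(-Real.log R))/θ := (lt_div_iff₀' hθ0).mpr h1
    calc Real.log X < (t*(-Real.log R))/θ := h2'
      _ = (t/θ) * (-Real.log R) := by ring
  have hneg : (t/θ) * (-Real.log R) < 0 := by
    have h' : 0 < t/θ := div_pos ht hθ0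
    nlinarith
  have hX0 : X ≠ 0 := by
    intro h; rw [h, Real.log_zero] at h2; linarith
  have hXpos : 0 < X := lt_of_le_of_ne hXnn (Ne.symm hX0)
  have h3 : X < R ^ (-(t/θ)) := by
    have h' := Real.exp_lt_exp.mpr h2
    rw [Real.exp_log hXpos] at h'
    rw [Real.rpow_def_of_pos hR0,
      show Real.log R * (-(t/θ)) = (t/θ)*(-Real.log R) by ring]
    exact h'
  have hSne : S ≠ ⊤ := by
    intro h
    apply hX0
    rw [hX, h]
    simp
  have h4 : S.toReal < R ^ ((d:ℝ) - t/θ) := by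
    have hstr : X * R^((d:ℝ)) = S.toReal := by
      rw [hX, mul_right_comm, ← Real.rpow_add hR0]
      simp
    rw [← hstr]
    calc X * R^((d:ℝ)) < R^(-(t/θ)) * R^((d:ℝ)) :=
        mul_lt_mul_of_pos_right h3 (Real.rpow_pos_of_pos hR0 _)
      _ = R ^ ((d:ℝ) - t/θ) := by rw [← Real.rpow_add hR0]; congr 1; ring
  calc S = ENNReal.ofReal S.toReal := (ENNReal.ofReal_toReal hSne).symm
    _ ≤ ENNReal.ofReal (R ^ ((d:ℝ) - t/θ)) := ENNReal.ofReal_le_ofReal h4.le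
open Metric in
lemma energy_lt_top {d : ℕ} (hd : 1 ≤ d) (μ : Measure (Ed d)) [IsFiniteMeasure μ]
    {θ s t R₀ : ℝ} (hθ0 : 0 < θ) (hs : 0 < s) (hst : s < t) (hR₀ : 2 ≤ R₀)
    (hS : ∀ k : ℕ, (∫⁻ z in {z : Ed d | ‖z‖ ≤ R₀ * 2 ^ (k+1)},
        ENNReal.ofReal (‖ftm μ z‖ ^ (2/θ)))
      ≤ ENNReal.ofReal ((R₀ * 2 ^ (k+1)) ^ ((d:ℝ) - t/θ))) :
    energyJ μ s θ < ⊤ := by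
  haveI : Nontrivial (Ed d) := ⟨⟨EuclideanSpace.single (⟨0, hd⟩ : Fin d) (1:ℝ), 0, by
    intro h
    have := congrArg (fun v : Ed d => v ⟨0, hd⟩) h
    simp at this⟩⟩
  have hR₀0 : (0:ℝ) < R₀ := by linarith
  set a : ℝ := s/θ - d with ha_def
  set f : Ed d → ℝ≥0∞ :=
    fun z => ENNReal.ofReal (‖ftm μ z‖ ^ (2/θ) * ‖z‖ ^ a) with hf
  set g : Ed d → ℝ≥0∞ := fun z => ENNReal.ofReal (‖ftm μ z‖ ^ (2/θ)) with hg
  set Bin : ℕ → Set (Ed d) :=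
    fun k => {z | R₀/2^(k+1) ≤ ‖z‖ ∧ ‖z‖ ≤ 2*(R₀/2^(k+1))} with hBin
  set Bout : ℕ → Set (Ed d) :=
    fun k => {z | R₀*2^k ≤ ‖z‖ ∧ ‖z‖ ≤ 2*(R₀*2^k)} with hBout
  have hmeasIn : ∀ k, MeasurableSet (Bin k) := fun k => by
    exact (measurableSet_le measurable_const measurable_norm).inter
      (measurableSet_le measurable_norm measurable_const)
  have hmeasOut : ∀ k, MeasurableSet (Bout k) := fun k => by
    exact (measurableSet_le measurable_const measurable_norm).inter
      (measurableSet_le measurable_norm measurable_const)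
  -- coverage
  have cover : (univ : Set (Ed d)) ⊆ {0} ∪ ((⋃ k, Bin k) ∪ ⋃ k, Bout k) := by
    intro z _
    rcases eq_or_ne z 0 with rfl | hz
    · exact Or.inl rfl
    right
    have hz0 : 0 < ‖z‖ := norm_pos_iff.mpr hz
    rcases le_or_gt ‖z‖ R₀ with hle | hlt
    · left
      have h1 : 1 ≤ R₀ / ‖z‖ := (one_le_div hz0).mpr hle
      obtain ⟨n, h2, h3⟩ := exists_nat_pow_near h1 (one_lt_two (α := ℝ))
      have h2' : (2:ℝ)^n * ‖z‖ ≤ R₀ := by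
        have := (le_div_iff₀ hz0).mp h2; linarith
      have h3' : R₀ < 2^(n+1) * ‖z‖ := by
        have := (div_lt_iff₀ hz0).mp h3; linarith
      refine mem_iUnion.mpr ⟨n, ?_, ?_⟩
      · rw [div_le_iff₀ (by positivity : (0:ℝ) < 2^(n+1))]
        nlinarith
      · rw [show 2*(R₀/2^(n+1)) = R₀/2^n by field_simp; ring]
        rw [le_div_iff₀ (by positivity : (0:ℝ) < 2^n)]
        nlinarith
    · right
      have h1 : 1 ≤ ‖z‖ / R₀ := le_of_lt ((one_lt_div hR₀0).mpr hlt)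
      obtain ⟨n, h2, h3⟩ := exists_nat_pow_near h1 (one_lt_two (α := ℝ))
      have h2' : (2:ℝ)^n * R₀ ≤ ‖z‖ := by
        have := (le_div_iff₀ hR₀0).mp h2; linarith
      have h3' : ‖z‖ < 2^(n+1) * R₀ := by
        have := (div_lt_iff₀ hR₀0).mp h3; linarith
      refine mem_iUnion.mpr ⟨n, ?_, ?_⟩
      · nlinarith
      · have : (2:ℝ)^(n+1) = 2 * 2^n := by ring
        nlinarith
  -- constants
  set M : ℝ := (μ Set.univ).toReal with hM
  have hM0 : 0 ≤ M := ENNReal.toReal_nonneg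
  set M' : ℝ := M ^ (2/θ) with hM'
  have hM'0 : 0 ≤ M' := Real.rpow_nonneg hM0 _
  have habs : ∀ z : Ed d, ‖ftm μ z‖ ^ (2/θ) ≤ M' :=
    fun z => Real.rpow_le_rpow (norm_nonneg _) (ftm_abs_le μ z) (by positivity)
  set V : ℝ≥0∞ := volume (ball (0 : Ed d) 1) with hV
  have hVfin : V ≠ ⊤ := measure_ball_lt_top.ne
  -- inner bound
  set qi : ℝ := (2:ℝ) ^ (-(s/θ)) with hqi
  have hqi1 : qi < 1 := Real.rpow_lt_one_of_one_lt_of_neg one_lt_two (by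
    have : 0 < s/θ := div_pos hs hθ0
    linarith)
  have hqi0 : 0 ≤ qi := Real.rpow_nonneg (by norm_num) _
  set Ci : ℝ≥0∞ := ENNReal.ofReal (M' * 2^|a| * R₀^(s/θ)) * V with hCi
  have hCifin : Ci ≠ ⊤ := ENNReal.mul_ne_top ENNReal.ofReal_ne_top hVfin
  have hInBound : ∀ k : ℕ, ∫⁻ z in Bin k, f z ≤ Ci * (ENNReal.ofReal qi)^k := by
    intro k
    have hc : (0:ℝ) < R₀/2^(k+1) := by positivity
    have h2c : 2*(R₀/2^(k+1)) = R₀/2^k := by field_simp; ring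
    have hfle : ∀ z ∈ Bin k, f z ≤ ENNReal.ofReal (M' * (2^|a| * (R₀/2^k)^a)) := by
      intro z hzmem
      apply ENNReal.ofReal_le_ofReal
      have h1 : ‖z‖ ^ a ≤ 2^|a| * ((2*(R₀/2^(k+1)))^a) :=
        rpow_shell_le hc hzmem.1 hzmem.2
      rw [h2c] at h1
      have h0 : 0 ≤ ‖ftm μ z‖ ^ (2/θ) := Real.rpow_nonneg (norm_nonneg _) _
      have h0' : (0:ℝ) ≤ ‖z‖ ^ a := Real.rpow_nonneg (norm_nonneg z) _
      exact mul_le_mul (habs z) h1 h0' hM'0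
    calc ∫⁻ z in Bin k, f z
        ≤ ∫⁻ _ in Bin k, ENNReal.ofReal (M' * (2^|a| * (R₀/2^k)^a)) :=
          setLIntegral_mono' (hmeasIn k) hfle
      _ = ENNReal.ofReal (M' * (2^|a| * (R₀/2^k)^a)) * volume (Bin k) :=
          setLIntegral_const _ _
      _ ≤ ENNReal.ofReal (M' * (2^|a| * (R₀/2^k)^a)) * (ENNReal.ofReal ((R₀/2^k)^d) * V) := by
          gcongr
          have hsub : Bin k ⊆ closedBall (0 : Ed d) (R₀/2^k) := by
            intro z hzmem
            rw [mem_closedBall_zero_iff]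
            calc ‖z‖ ≤ 2*(R₀/2^(k+1)) := hzmem.2
              _ = R₀/2^k := h2c
          calc volume (Bin k) ≤ volume (closedBall (0 : Ed d) (R₀/2^k)) := measure_mono hsub
            _ = ENNReal.ofReal ((R₀/2^k)^d) * V := by
                rw [Measure.addHaar_closedBall _ _ (by positivity : (0:ℝ) ≤ R₀/2^k),
                  finrank_euclideanSpace, Fintype.card_fin]
      _ = Ci * (ENNReal.ofReal qi)^k := by
          have hbase : (0:ℝ) < R₀/2^k := by positivity
          have h1 : ((R₀/2^k:ℝ))^d = (R₀/2^k)^(d:ℝ) := (Real.rpow_natCast _ d).symm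
          have h2 : (R₀/2^k)^a * (R₀/2^k)^(d:ℝ) = (R₀/2^k)^(s/θ) := by
            rw [← Real.rpow_add hbase]; congr 1; rw [ha_def]; ring
          have h3 : (R₀/2^k)^(s/θ) = R₀^(s/θ) * qi^k := by
            rw [Real.div_rpow hR₀0.le (by positivity : (0:ℝ) ≤ 2^k),
              rpow_pow_mul (by norm_num : (0:ℝ) ≤ 2) (s/θ) k, hqi,
              Real.rpow_neg (by norm_num : (0:ℝ) ≤ 2), div_eq_mul_inv, inv_pow]
          have key : (M' * (2^|a| * (R₀/2^k)^a)) * (((R₀/2^k):ℝ)^d)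
              = (M' * 2^|a| * R₀^(s/θ)) * qi^k := by
            calc (M' * (2^|a| * (R₀/2^k)^a)) * (((R₀/2^k):ℝ)^d)
                = M' * (2^|a|) * ((R₀/2^k)^a * (R₀/2^k)^(d:ℝ)) := by rw [h1]; ring
              _ = M' * 2^|a| * (R₀^(s/θ) * qi^k) := by rw [h2, h3]
              _ = (M' * 2^|a| * R₀^(s/θ)) * qi^k := by ring
          calc ENNReal.ofReal (M' * (2^|a| * (R₀/2^k)^a)) * (ENNReal.ofReal ((R₀/2^k)^d) * V)
              = ENNReal.ofReal ((M' * (2^|a| * (R₀/2^k)^a)) * (((R₀/2^k):ℝ)^d)) * V := by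
                rw [ENNReal.ofReal_mul (show (0:ℝ) ≤ M' * (2^|a| * (R₀/2^k)^a) by positivity),
                  ← mul_assoc]
            _ = ENNReal.ofReal ((M' * 2^|a| * R₀^(s/θ)) * qi^k) * V := by rw [key]
            _ = Ci * (ENNReal.ofReal qi)^k := by
                rw [ENNReal.ofReal_mul (show (0:ℝ) ≤ M' * 2^|a| * R₀^(s/θ) by positivity),
                  ENNReal.ofReal_pow hqi0, hCi]
                exact mul_right_comm _ _ _
  -- outer bound
  set b : ℝ := (s-t)/θ with hb_def
  have hb : b < 0 := div_neg_of_neg_of_pos (by linarith) hθ0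
  set qo : ℝ := (2:ℝ)^b with hqo
  have hqo1 : qo < 1 := Real.rpow_lt_one_of_one_lt_of_neg one_lt_two hb
  have hqo0 : 0 ≤ qo := Real.rpow_nonneg (by norm_num) _
  set Co : ℝ≥0∞ := ENNReal.ofReal (2^|a| * R₀^b * qo) with hCo
  have hOutBound : ∀ k : ℕ, ∫⁻ z in Bout k, f z ≤ Co * (ENNReal.ofReal qo)^k := by
    intro k
    have hc : (0:ℝ) < R₀*2^k := by positivity
    have h2c : 2*(R₀*2^k) = R₀*2^(k+1) := by ring
    have hX : (0:ℝ) < R₀*2^(k+1) := by positivity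
    set Ck : ℝ := 2^|a| * (R₀*2^(k+1))^a with hCk
    have hCk0 : (0:ℝ) ≤ Ck := by positivity
    have hfg : ∀ z ∈ Bout k, f z ≤ ENNReal.ofReal Ck * g z := by
      intro z hz
      rw [hf, hg, ← ENNReal.ofReal_mul hCk0]
      apply ENNReal.ofReal_le_ofReal
      have h1 : ‖z‖^a ≤ 2^|a| * ((2*(R₀*2^k))^a) := rpow_shell_le hc hz.1 hz.2
      rw [h2c] at h1
      have h0 : 0 ≤ ‖ftm μ z‖ ^ (2/θ) :=
        Real.rpow_nonneg (norm_nonneg _) _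
      calc ‖ftm μ z‖ ^ (2/θ) * ‖z‖^a
          ≤ ‖ftm μ z‖ ^ (2/θ) * Ck := mul_le_mul_of_nonneg_left h1 h0
        _ = Ck * (‖ftm μ z‖ ^ (2/θ)) := mul_comm _ _
    have hsub : Bout k ⊆ {z : Ed d | ‖z‖ ≤ R₀*2^(k+1)} := by
      intro z hz
      exact le_trans hz.2 (le_of_eq h2c)
    calc ∫⁻ z in Bout k, f z
        ≤ ∫⁻ z in Bout k, ENNReal.ofReal Ck * g z := setLIntegral_mono' (hmeasOut k) hfg
      _ = ENNReal.ofReal Ck * ∫⁻ z in Bout k, g z :=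
          lintegral_const_mul' _ _ ENNReal.ofReal_ne_top
      _ ≤ ENNReal.ofReal Ck * ∫⁻ z in {z : Ed d | ‖z‖ ≤ R₀*2^(k+1)}, g z :=
          mul_le_mul_right (lintegral_mono' (Measure.restrict_mono hsub le_rfl) le_rfl) _
      _ ≤ ENNReal.ofReal Ck * ENNReal.ofReal ((R₀*2^(k+1))^((d:ℝ) - t/θ)) :=
          mul_le_mul_right (hS k) _
      _ = Co * (ENNReal.ofReal qo)^k := by
          rw [← ENNReal.ofReal_mul hCk0]
          have hbb : a + ((d:ℝ) - t/θ) = b := by rw [ha_def, hb_def]; ring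
          have e1 : (R₀*2^(k+1) : ℝ)^a * (R₀*2^(k+1))^((d:ℝ)-t/θ) = (R₀*2^(k+1))^b := by
            rw [← Real.rpow_add hX, hbb]
          have e2 : (R₀*2^(k+1):ℝ)^b = R₀^b * ((2^b)^k * 2^b) := by
            rw [Real.mul_rpow hR₀0.le (by positivity : (0:ℝ) ≤ 2^(k+1)),
              rpow_pow_mul (by norm_num : (0:ℝ) ≤ 2) b (k+1), pow_succ]
          have key : Ck * ((R₀*2^(k+1))^((d:ℝ) - t/θ)) = (2^|a| * R₀^b * qo) * qo^k := by
            calc Ck * ((R₀*2^(k+1))^((d:ℝ) - t/θ))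
                = 2^|a| * ((R₀*2^(k+1) : ℝ)^a * (R₀*2^(k+1))^((d:ℝ)-t/θ)) := by
                  rw [hCk]; ring
              _ = 2^|a| * (R₀^b * ((2^b)^k * 2^b)) := by rw [e1, e2]
              _ = (2^|a| * R₀^b * qo) * qo^k := by rw [hqo]; ring
          rw [key, ENNReal.ofReal_mul (show (0:ℝ) ≤ 2^|a| * R₀^b * qo by positivity),
            ENNReal.ofReal_pow hqo0, hCo]
  -- assembly
  have h0 : ∫⁻ z in ({0} : Set (Ed d)), f z = 0 := by
    rw [lintegral_singleton, measure_singleton, mul_zero]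
  have hIfin : (∫⁻ z, f z) < ⊤ := by
    have hcalc : (∫⁻ z, f z) ≤ (∫⁻ z in ({0} : Set (Ed d)), f z) +
        ((∑' k, ∫⁻ z in Bin k, f z) + (∑' k, ∫⁻ z in Bout k, f z)) := by
      calc ∫⁻ z, f z = ∫⁻ z in (univ : Set (Ed d)), f z := (setLIntegral_univ f).symm
        _ ≤ ∫⁻ z in ({0} : Set (Ed d)) ∪ ((⋃ k, Bin k) ∪ ⋃ k, Bout k), f z :=
            lintegral_mono' (Measure.restrict_mono cover le_rfl) le_rfl
        _ ≤ (∫⁻ z in ({0} : Set (Ed d)), f z) +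
            ∫⁻ z in ((⋃ k, Bin k) ∪ ⋃ k, Bout k), f z := lintegral_union_le _ _ _
        _ ≤ _ := add_le_add le_rfl (le_trans (lintegral_union_le _ _ _)
            (add_le_add (lintegral_iUnion_le _ _) (lintegral_iUnion_le _ _)))
    refine lt_of_le_of_lt hcalc ?_
    rw [h0, zero_add]
    exact ENNReal.add_lt_top.mpr
      ⟨lt_of_le_of_lt (ENNReal.tsum_le_tsum hInBound) (tsum_geom_lt_top hqi1 Ci hCifin),
       lt_of_le_of_lt (ENNReal.tsum_le_tsum hOutBound)
         (tsum_geom_lt_top hqo1 Co ENNReal.ofReal_ne_top)⟩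
  simp only [energyJ, if_neg hθ0.ne']
  exact ENNReal.rpow_lt_top_of_nonneg hθ0.le hIfin.ne

/-- For a finite Borel measure `μ` on `ℝ^d` and `θ ∈ (0,1]`,
`dim_F^θ μ ≥ F̲_μ(θ)`. -/
theorem statement10 {d : ℕ} (hd : 1 ≤ d) (μ : Measure (Ed d)) [IsFiniteMeasure μ]
    (θ : ℝ) (hθ : θ ∈ Set.Ioc (0:ℝ) 1) :
    ENNReal.ofReal (lowerAvgFourierDim μ θ) ≤ dimF μ θ := by
  obtain ⟨hθ0, hθ1⟩ := hθ
  set u : ℝ → ℝ := fun R : ℝ =>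
    θ * Real.log (R ^ (-(d : ℝ)) *
      (∫⁻ z in {z : Ed d | ‖z‖ ≤ R},
        ENNReal.ofReal (‖ftm μ z‖ ^ (2 / θ))).toReal) / (-Real.log R) with hu_def
  have hA : lowerAvgFourierDim μ θ = Filter.liminf u Filter.atTop := rfl
  by_cases hbd : Filter.IsBoundedUnder (· ≥ ·) Filter.atTop u
  swap
  · have h0 : Filter.liminf u Filter.atTop = 0 := by
      rw [Filter.liminf_eq]
      have hemp : {a : ℝ | ∀ᶠ n in Filter.atTop, a ≤ u n} = ∅ := by
        rw [Set.eq_empty_iff_forall_notMem]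
        intro a ha
        exact hbd ⟨a, Filter.eventually_map.mpr ha⟩
      rw [hemp]
      exact Real.sSup_empty
    rw [hA, h0]
    simp
  · apply ENNReal.le_of_forall_nnreal_lt
    intro r hr
    have hrA : (r:ℝ) < lowerAvgFourierDim μ θ := by
      by_contra hcon
      push_neg at hcon
      have hle : ENNReal.ofReal (lowerAvgFourierDim μ θ) ≤ (r : ℝ≥0∞) := by
        calc ENNReal.ofReal (lowerAvgFourierDim μ θ) ≤ ENNReal.ofReal (r:ℝ) :=
            ENNReal.ofReal_le_ofReal hcon
          _ = (r:ℝ≥0∞) := ENNReal.ofReal_coe_nnreal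
      exact absurd hle (not_le.mpr hr)
    rcases eq_or_ne r 0 with rfl | hr0
    · exact zero_le
    have hr0' : (0:ℝ) < r := by positivity
    set t := ((r:ℝ) + lowerAvgFourierDim μ θ)/2 with ht_def
    have hst : (r:ℝ) < t := by rw [ht_def]; linarith
    have htA : t < lowerAvgFourierDim μ θ := by rw [ht_def]; linarith
    have ht0 : 0 < t := lt_trans hr0' hst
    have hev := Filter.eventually_lt_of_lt_liminf (hA ▸ htA) hbd
    rw [Filter.eventually_atTop] at hev
    obtain ⟨R₁, hR₁⟩ := hev
    set R₀ := max R₁ 2 with hR₀def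
    have hR₀2 : (2:ℝ) ≤ R₀ := le_max_right _ _
    have hS : ∀ k : ℕ, (∫⁻ z in {z : Ed d | ‖z‖ ≤ R₀ * 2 ^ (k+1)},
        ENNReal.ofReal (‖ftm μ z‖ ^ (2/θ)))
        ≤ ENNReal.ofReal ((R₀ * 2 ^ (k+1)) ^ ((d:ℝ) - t/θ)) := by
      intro k
      have hpow : (1:ℝ) ≤ 2^(k+1) := one_le_pow₀ (by norm_num : (1:ℝ) ≤ 2)
      have hRk : R₀ ≤ R₀ * 2^(k+1) :=
        le_mul_of_one_le_right (by linarith) hpow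
      have h2 : (2:ℝ) ≤ R₀ * 2^(k+1) := le_trans hR₀2 hRk
      exact S_le_of_lt μ hθ0 ht0 h2 (hR₁ _ (le_trans (le_max_left _ _) hRk))
    have hfin := energy_lt_top hd μ hθ0 hr0' hst hR₀2 hS
    exact le_iSup₂ (f := fun (s : ℝ≥0) (_ : energyJ μ s θ < ⊤) => (s : ℝ≥0∞)) r hfin

end
end

section
/- Let μ be a finite Borel measure on ℝ^d. Then for all θ ∈ [0,1] and all integers k ≥ 1, dim_F^θ (μ^{∗k}) = k·dim_F^{θ/k} μ, where μ^{∗k} is the k-fold convolution of μ with itself. In particular, dim_S (μ^{∗k}) = k·dim_F^{1/k} μ. -/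
open MeasureTheory Filter Set
open scoped ENNReal NNReal

noncomputable section

/-- The convolution of two measures on `ℝ^d`. -/
noncomputable def mconv {d : ℕ} (μ ν : Measure (Ed d)) : Measure (Ed d) :=
  Measure.map (fun q : Ed d × Ed d => q.1 + q.2) (μ.prod ν)

/-- The `k`-fold convolution power `μ^{∗k}` (with `μ^{∗0} = δ₀`). -/
noncomputable def convPow {d : ℕ} (μ : Measure (Ed d)) : ℕ → Measure (Ed d)
  | 0 => Measure.dirac 0
  | n + 1 => mconv (convPow μ n) μ

lemma isFiniteMeasure_convPow {d : ℕ} (μ : Measure (Ed d)) [IsFiniteMeasure μ] (k : ℕ) :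
    IsFiniteMeasure (convPow μ k) := by
  induction k with
  | zero => exact inferInstanceAs (IsFiniteMeasure (Measure.dirac (0 : Ed d)))
  | succ n ih =>
    haveI := ih
    exact Measure.isFiniteMeasure_map _ _

lemma ftm_mconv {d : ℕ} (ν μ : Measure (Ed d)) [IsFiniteMeasure ν] [IsFiniteMeasure μ]
    (z : Ed d) : ftm (mconv ν μ) z = ftm ν z * ftm μ z := by
  have h1 : Continuous fun x : Ed d => (inner ℝ z x : ℝ) :=
    continuous_const.inner continuous_id
  have hc : Continuous fun x : Ed d =>
      Complex.exp (Complex.I * (-2 * Real.pi * (inner ℝ z x : ℝ))) :=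
    Complex.continuous_exp.comp (continuous_const.mul
      (continuous_const.mul (Complex.continuous_ofReal.comp h1)))
  unfold ftm mconv
  rw [integral_map (by fun_prop) hc.aestronglyMeasurable]
  have h : ∀ q : Ed d × Ed d,
      Complex.exp (Complex.I * (-2 * Real.pi * ((inner ℝ z (q.1 + q.2) : ℝ) : ℂ)))
      = Complex.exp (Complex.I * (-2 * Real.pi * ((inner ℝ z q.1 : ℝ) : ℂ))) *
        Complex.exp (Complex.I * (-2 * Real.pi * ((inner ℝ z q.2 : ℝ) : ℂ))) := by
    intro q
    rw [← Complex.exp_add, inner_add_right]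
    push_cast
    ring_nf
  simp_rw [h]
  exact integral_prod_mul
    (f := fun x : Ed d => Complex.exp (Complex.I * (-2 * Real.pi * ((inner ℝ z x : ℝ) : ℂ))))
    (g := fun x : Ed d => Complex.exp (Complex.I * (-2 * Real.pi * ((inner ℝ z x : ℝ) : ℂ))))

lemma ftm_convPow {d : ℕ} (μ : Measure (Ed d)) [IsFiniteMeasure μ] (k : ℕ) (z : Ed d) :
    ftm (convPow μ k) z = (ftm μ z) ^ k := by
  induction k with
  | zero =>
    simp [convPow, ftm, integral_dirac, inner_zero_right]
  | succ n ih =>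
    haveI := isFiniteMeasure_convPow μ n
    rw [convPow, ftm_mconv, ih, pow_succ]

lemma energyJ_convPow_lt_top_iff {d : ℕ} (μ : Measure (Ed d)) [IsFiniteMeasure μ] {k : ℕ}
    (hk : 1 ≤ k) {θ : ℝ} (hθ0 : 0 ≤ θ) (s : ℝ) :
    energyJ (convPow μ k) s θ < ⊤ ↔ energyJ μ (s / k) (θ / k) < ⊤ := by
  have hkR : (0:ℝ) < k := by exact_mod_cast hk
  have hkR' : (k:ℝ) ≠ 0 := ne_of_gt hkR
  have habs : ∀ z : Ed d, ‖ftm (convPow μ k) z‖ = ‖ftm μ z‖ ^ k := by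
    intro z; rw [ftm_convPow, norm_pow]
  rcases eq_or_ne θ 0 with h0 | h0
  · subst h0
    rw [energyJ, energyJ, if_pos rfl, if_pos (by simp)]
    have hpt : ∀ z : Ed d,
        ENNReal.ofReal (‖ftm (convPow μ k) z‖ ^ 2 * ‖z‖ ^ s)
        = (ENNReal.ofReal (‖ftm μ z‖ ^ 2 * ‖z‖ ^ (s / k))) ^ (k:ℝ) := by
      intro z
      have hreal : ‖ftm (convPow μ k) z‖ ^ 2 * ‖z‖ ^ s
          = (‖ftm μ z‖ ^ 2 * ‖z‖ ^ (s / (k:ℝ))) ^ (k:ℝ) := by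
        rw [habs z, Real.mul_rpow (by positivity) (by positivity),
          Real.rpow_natCast ((‖ftm μ z‖) ^ 2) k, pow_right_comm,
          ← Real.rpow_mul (norm_nonneg _), div_mul_cancel₀ _ hkR']
      rw [hreal, ← ENNReal.ofReal_rpow_of_nonneg (by positivity) (le_of_lt hkR)]
    simp_rw [hpt]
    have hsup := ((ENNReal.orderIsoRpow (k:ℝ) hkR).map_iSup
      (fun z : Ed d => ENNReal.ofReal (‖ftm μ z‖ ^ 2 * ‖z‖ ^ (s / k)))).symm
    simp only [ENNReal.orderIsoRpow_apply] at hsup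
    rw [hsup, ENNReal.rpow_lt_top_iff_of_pos hkR]
  · have hθ : 0 < θ := lt_of_le_of_ne hθ0 (Ne.symm h0)
    have hθk : θ / k ≠ 0 := by positivity
    rw [energyJ, energyJ, if_neg h0, if_neg hθk]
    have hpt : ∀ z : Ed d,
        (‖ftm (convPow μ k) z‖ ^ (2 / θ) * ‖z‖ ^ (s / θ - d))
        = (‖ftm μ z‖ ^ (2 / (θ / k)) * ‖z‖ ^ ((s / k) / (θ / k) - d)) := by
      intro z
      rw [habs z, ← Real.rpow_natCast (‖ftm μ z‖) k,
        ← Real.rpow_mul (norm_nonneg _),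
        show (k:ℝ) * (2 / θ) = 2 / (θ / k) by field_simp,
        show s / θ - d = (s / k) / (θ / k) - d by field_simp]
    simp_rw [hpt]
    rw [ENNReal.rpow_lt_top_iff_of_pos hθ, ENNReal.rpow_lt_top_iff_of_pos (by positivity)]

theorem statement14 {d : ℕ} (hd : 1 ≤ d) (μ : Measure (Ed d)) [IsFiniteMeasure μ]
    (k : ℕ) (hk : 1 ≤ k) :
    (∀ θ ∈ Set.Icc (0:ℝ) 1,
      dimF (convPow μ k) θ = (k : ℝ≥0∞) * dimF μ (θ / k)) ∧
    dimF (convPow μ k) 1 = (k : ℝ≥0∞) * dimF μ (1 / k) := by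
  have main : ∀ θ ∈ Set.Icc (0:ℝ) 1,
      dimF (convPow μ k) θ = (k : ℝ≥0∞) * dimF μ (θ / k) := by
    intro θ hθ
    have hkN : (k:NNReal) ≠ 0 := by exact_mod_cast Nat.one_le_iff_ne_zero.mp hk
    apply le_antisymm
    · apply iSup₂_le
      intro s hs
      have h1 : energyJ μ (↑s / k) (θ / k) < ⊤ :=
        (energyJ_convPow_lt_top_iff μ hk hθ.1 s).mp hs
      have h2 : ((s / k : NNReal) : ℝ) = (s:ℝ) / k := by
        push_cast; ring
      have h3 : energyJ μ ((s / (k:NNReal) : NNReal) : ℝ) (θ / k) < ⊤ := by rw [h2]; exact h1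
      calc (s : ℝ≥0∞) = (k : ℝ≥0∞) * ((s / (k:NNReal) : NNReal) : ℝ≥0∞) := by
            rw [← ENNReal.coe_natCast, ← ENNReal.coe_mul, mul_div_cancel₀ _ hkN]
        _ ≤ (k : ℝ≥0∞) * dimF μ (θ / k) := by
            gcongr
            exact le_iSup₂ (f := fun (t : NNReal) (_ : energyJ μ t (θ/k) < ⊤) => (t : ℝ≥0∞))
              (s / (k:NNReal)) h3
    · rw [dimF]
      simp_rw [ENNReal.mul_iSup]
      apply iSup₂_le
      intro t ht
      have h2 : (((k:NNReal) * t : NNReal) : ℝ) / (k:ℝ) = (t:ℝ) := by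
        push_cast
        field_simp
      have h3 : energyJ (convPow μ k) (((k:NNReal) * t : NNReal) : ℝ) θ < ⊤ := by
        rw [energyJ_convPow_lt_top_iff μ hk hθ.1, h2]; exact ht
      calc (k : ℝ≥0∞) * (t : ℝ≥0∞) = (((k:NNReal) * t : NNReal) : ℝ≥0∞) := by
            push_cast; ring
        _ ≤ dimF (convPow μ k) θ :=
            le_iSup₂ (f := fun (s : NNReal) (_ : energyJ (convPow μ k) s θ < ⊤) => (s : ℝ≥0∞))
              ((k:NNReal) * t) h3
  exact ⟨main, main 1 ⟨zero_le_one, le_refl 1⟩⟩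

end
end
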